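/- arXiv:math/0610161 — 2 statements merged into one kernel-verified Lean document; each statement's English description precedes it below -/
import Mathlib

section
/- Let J be closed and φ, η ∈ J*. If φ meshes with η, then the complex conjugate of χ^η(x_φ) equals q^{corank(η) − rank(M_φ^η)} · θ(b_0 · b_φ^η) · Π_{(i,j) ∈ supp(φ) ∩ supp(η)} θ(φ_{ij} η_{ij}), where b_0 ∈ 𝔽_q^J is any solution of M_φ^η b_0 = −a_φ^η; if φ does not mesh with η, then χ^η(x_φ) = 0. -/
open Matrix BigOperators

namespace SCT

/-- Pairs of indices. -/
abbrev Pr (n : ℕ) := Fin n × Fin n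

/-- A closed subset `J ⊆ {(i,j) : i < j}`:  `(i,j) ∈ J` and `(j,k) ∈ J` imply `(i,k) ∈ J`. -/
def Closed {n : ℕ} (J : Finset (Pr n)) : Prop :=
  (∀ p ∈ J, p.1 < p.2) ∧
  ∀ i j k : Fin n, (i, j) ∈ J → (j, k) ∈ J → (i, k) ∈ J

variable {F : Type*} [Field F] [Fintype F] [DecidableEq F] {n : ℕ}

/-- `X_φ = Σ_{(i,j) ∈ J} φ_{ij} X_{ij}`. -/
def Xmat (J : Finset (Pr n)) (φ : Pr n → F) : Matrix (Fin n) (Fin n) F :=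
  Matrix.of fun i j => if (i, j) ∈ J then φ (i, j) else 0

/-- `x_φ = 1 + X_φ`. -/
def xmat (J : Finset (Pr n)) (φ : Pr n → F) : Matrix (Fin n) (Fin n) F :=
  1 + Xmat J φ

/-- `x_{ij}(t) = 1 + t X_{ij}`. -/
def xelt (i j : Fin n) (t : F) : Matrix (Fin n) (Fin n) F :=
  1 + Matrix.single i j t

/-- The pattern group `U_J`, as a set of matrices: ones on the diagonal, entries off the
diagonal vanish outside `J`. -/
def UJ (J : Finset (Pr n)) : Set (Matrix (Fin n) (Fin n) F) :=
  {M | (∀ i, M i i = 1) ∧ ∀ i j : Fin n, i ≠ j → (i, j) ∉ J → M i j = 0}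

/-- `𝔫_J`: matrices supported on `J`. -/
def nJset (J : Finset (Pr n)) : Set (Matrix (Fin n) (Fin n) F) :=
  {M | ∀ i j : Fin n, (i, j) ∉ J → M i j = 0}

/-- The functional `λ_η` evaluated at a matrix of `𝔫_J`. -/
def lam (J : Finset (Pr n)) (η : Pr n → F) (X : Matrix (Fin n) (Fin n) F) : F :=
  ∑ p ∈ J, η p * X p.1 p.2

/-- A functional with coefficients indexed by `J` evaluated at a matrix. -/
def lamSub (J : Finset (Pr n)) (η : {p // p ∈ J} → F) (X : Matrix (Fin n) (Fin n) F) : F :=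
  ∑ p ∈ J.attach, η p * X p.1.1 p.1.2

/-- The two-sided orbit `O_φ = U_J X_φ U_J ⊆ 𝔫_J`. -/
def biOrbit (J : Finset (Pr n)) (φ : Pr n → F) : Set (Matrix (Fin n) (Fin n) F) :=
  {Y | ∃ u v : Matrix (Fin n) (Fin n) F, u ∈ UJ J ∧ v ∈ UJ J ∧ Y = u * Xmat J φ * v}

/-- `(M_φ^R)_{(i,l),(j,k)} = φ_{ij}` if `k = l` and `(i,j,l) ∈ 𝒫`, else `0`. -/
def MphiR (J : Finset (Pr n)) (φ : Pr n → F) : Matrix {p // p ∈ J} {p // p ∈ J} F :=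
  Matrix.of fun p q =>
    if q.1.2 = p.1.2 ∧ (p.1.1, q.1.1) ∈ J ∧ (q.1.1, p.1.2) ∈ J then φ (p.1.1, q.1.1) else 0

/-- `(M_φ^L)_{(i,l),(j,k)} = φ_{kl}` if `i = j` and `(i,k,l) ∈ 𝒫`, else `0`. -/
def MphiL (J : Finset (Pr n)) (φ : Pr n → F) : Matrix {p // p ∈ J} {p // p ∈ J} F :=
  Matrix.of fun p q =>
    if q.1.1 = p.1.1 ∧ (p.1.1, q.1.2) ∈ J ∧ (q.1.2, p.1.2) ∈ J then φ (q.1.2, p.1.2) else 0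

/-- `(M_L^η)_{(j,k),(i,l)} = η_{ik}` if `l = j` and `(i,j,k) ∈ 𝒫`, else `0`. -/
def MetaL (J : Finset (Pr n)) (η : Pr n → F) : Matrix {p // p ∈ J} {p // p ∈ J} F :=
  Matrix.of fun p q =>
    if q.1.2 = p.1.1 ∧ (q.1.1, p.1.1) ∈ J ∧ (p.1.1, p.1.2) ∈ J then η (q.1.1, p.1.2) else 0

/-- `(M_R^η)_{(j,k),(i,l)} = η_{jl}` if `k = i` and `(j,k,l) ∈ 𝒫`, else `0`. -/
def MetaR (J : Finset (Pr n)) (η : Pr n → F) : Matrix {p // p ∈ J} {p // p ∈ J} F :=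
  Matrix.of fun p q =>
    if q.1.1 = p.1.2 ∧ (p.1.1, p.1.2) ∈ J ∧ (p.1.2, q.1.2) ∈ J then η (p.1.1, q.1.2) else 0

/-- `corank(η) = rank(M_L^η)`. -/
noncomputable def corank (J : Finset (Pr n)) (η : Pr n → F) : ℕ := (MetaL J η).rank

/-- `(M_φ^η)_{(i,j),(k,l)} = φ_{jk} η_{il}` if `(i,j,k,l) ∈ 𝒫`, else `0`. -/
def Mmesh (J : Finset (Pr n)) (φ η : Pr n → F) : Matrix {p // p ∈ J} {p // p ∈ J} F :=
  Matrix.of fun p q =>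
    if (p.1.2, q.1.1) ∈ J then φ (p.1.2, q.1.1) * η (p.1.1, q.1.2) else 0

/-- `(a_φ^η)_{(i,j)} = Σ_{(i,j,k) ∈ 𝒫} φ_{jk} η_{ik}`. -/
def aVec (J : Finset (Pr n)) (φ η : Pr n → F) : {p // p ∈ J} → F :=
  fun p => ∑ k : Fin n, if (p.1.2, k) ∈ J then φ (p.1.2, k) * η (p.1.1, k) else 0

/-- `(b_φ^η)_{(j,k)} = Σ_{(i,j,k) ∈ 𝒫} φ_{ij} η_{ik}`. -/
def bVec (J : Finset (Pr n)) (φ η : Pr n → F) : {p // p ∈ J} → F :=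
  fun p => ∑ i : Fin n, if (i, p.1.1) ∈ J then φ (i, p.1.1) * η (i, p.1.2) else 0

/-- `φ` meshes with `η`. -/
def Meshes (J : Finset (Pr n)) (φ η : Pr n → F) : Prop :=
  (∃ b : {p // p ∈ J} → F, (Mmesh J φ η).mulVec b = -aVec J φ η) ∧
  ∀ v : {p // p ∈ J} → F, (Mmesh J φ η).mulVec v = 0 → bVec J φ η ⬝ᵥ v = 0

/-- The supercharacter `χ^η` evaluated at `x_φ`. -/
noncomputable def superchar (J : Finset (Pr n)) (θ : AddChar F ℂ) (η φ : Pr n → F) : ℂ :=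
  ((Fintype.card F : ℂ) ^ corank J η / (Nat.card (biOrbit J φ) : ℂ)) *
    ∑ᶠ Y ∈ biOrbit J φ, (starRingEnd ℂ) (θ (lam J η Y))

/-- `χ` restricted to `U` is the character of an irreducible complex representation of `U`. -/
def IsIrredCharOn (U : Set (Matrix (Fin n) (Fin n) F))
    (χ : Matrix (Fin n) (Fin n) F → ℂ) : Prop :=
  ∃ d : ℕ, 0 < d ∧ ∃ ρ : Matrix (Fin n) (Fin n) F → Matrix (Fin d) (Fin d) ℂ,
    ρ 1 = 1 ∧
    (∀ A ∈ U, ∀ B ∈ U, ρ (A * B) = ρ A * ρ B) ∧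
    (∀ W : Submodule ℂ (Fin d → ℂ), (∀ A ∈ U, ∀ w ∈ W, (ρ A).mulVec w ∈ W) → W = ⊥ ∨ W = ⊤) ∧
    ∀ A ∈ U, (ρ A).trace = χ A

/-- The full set of positive roots. -/
def Jfull (n : ℕ) : Finset (Pr n) := Finset.univ.filter fun p : Pr n => p.1 < p.2

/-!  The total order and partial sum on positive roots. -/

/-- `α < β` in the total order: `(r,s) < (i,j)` iff `r > i`, or `r = i` and `s > j`. -/
def rlt {n : ℕ} (a b : Pr n) : Prop := b.1 < a.1 ∨ (a.1 = b.1 ∧ b.2 < a.2)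

/-- `α + β` is defined in `R⁺`. -/
def rdef {n : ℕ} (a b : Pr n) : Prop := a.2 = b.1 ∨ b.2 = a.1

/-- The sum `α + β` (when defined). -/
def rsum {n : ℕ} (a b : Pr n) : Pr n := if a.2 = b.1 then (a.1, b.2) else (b.1, a.2)

/-! Algebra groups. -/

/-- The algebra group `H = 1 + 𝔫`. -/
def algH (nn : Submodule F (Matrix (Fin n) (Fin n) F)) : Set (Matrix (Fin n) (Fin n) F) :=
  {M | ∃ X ∈ nn, M = 1 + X}

/-- The two sided orbit `H X H ⊆ 𝔫` of `X`. -/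
def algBiOrbit (nn : Submodule F (Matrix (Fin n) (Fin n) F))
    (X : Matrix (Fin n) (Fin n) F) : Set nn :=
  {Y | ∃ u ∈ algH nn, ∃ v ∈ algH nn, (Y : Matrix (Fin n) (Fin n) F) = u * X * v}

/-- The right orbit `{λ · u : u ∈ H} ⊆ 𝔫*` of a functional `λ`, described via
`λ' = λ · u⁻¹ ↔ (∀ Y, λ' Y = λ (Y u))`. -/
def algRightOrbit (nn : Submodule F (Matrix (Fin n) (Fin n) F))
    (l : Module.Dual F nn) : Set (Module.Dual F nn) :=
  {l' | ∃ u ∈ algH nn, ∀ (Y : nn) (h : (Y : Matrix (Fin n) (Fin n) F) * u ∈ nn),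
      l' Y = l ⟨(Y : Matrix (Fin n) (Fin n) F) * u, h⟩}

/-- The supercharacter `χ^λ` of an algebra group, evaluated at `1 + X`. -/
noncomputable def algSuperchar (nn : Submodule F (Matrix (Fin n) (Fin n) F))
    (θ : AddChar F ℂ) (l : Module.Dual F nn) (X : Matrix (Fin n) (Fin n) F) : ℂ :=
  ((Nat.card (algRightOrbit nn l) : ℂ) / (Nat.card (algBiOrbit nn X) : ℂ)) *
    ∑ᶠ Y ∈ algBiOrbit nn X, (starRingEnd ℂ) (θ (l Y))

/-! Algebra groups with a fixed basis `X_1, …, X_d` of `𝔫`. -/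

/-- `X_ρ = Σ_i ρ_i X_i`. -/
def bigX {d : ℕ} (Xb : Fin d → Matrix (Fin n) (Fin n) F) (ρ : Fin d → F) :
    Matrix (Fin n) (Fin n) F :=
  ∑ i : Fin d, ρ i • Xb i

/-- The two-sided orbit of `X_φ`, in coordinates. -/
def algCoeffBiOrbit {d : ℕ} (Xb : Fin d → Matrix (Fin n) (Fin n) F) (φ : Fin d → F) :
    Set (Fin d → F) :=
  {ρ | ∃ ζ₁ ζ₂ : Fin d → F,
      (1 + bigX Xb ζ₁) * bigX Xb φ * (1 + bigX Xb ζ₂) = bigX Xb ρ}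

/-- The right orbit of `λ_η`, in coordinates (`λ_η(X_ν) = η ⬝ᵥ ν`). -/
def algCoeffRightOrbit {d : ℕ} (Xb : Fin d → Matrix (Fin n) (Fin n) F) (η : Fin d → F) :
    Set (Fin d → F) :=
  {η' | ∃ ζ : Fin d → F, ∀ ρ ν : Fin d → F,
      bigX Xb ρ * (1 + bigX Xb ζ) = bigX Xb ν → η' ⬝ᵥ ρ = η ⬝ᵥ ν}

/-- The supercharacter `χ^η` of an algebra group with fixed basis, evaluated at `x_φ`. -/
noncomputable def algCoeffSuperchar {d : ℕ} (Xb : Fin d → Matrix (Fin n) (Fin n) F)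
    (θ : AddChar F ℂ) (η φ : Fin d → F) : ℂ :=
  ((Nat.card (algCoeffRightOrbit Xb η) : ℂ) / (Nat.card (algCoeffBiOrbit Xb φ) : ℂ)) *
    ∑ᶠ ρ ∈ algCoeffBiOrbit Xb φ, (starRingEnd ℂ) (θ (η ⬝ᵥ ρ))

/-- `(C_i)_{jk} = c_{ij}^k`. -/
def Cleft {d : ℕ} (c : Fin d → Fin d → Fin d → F) (i : Fin d) : Matrix (Fin d) (Fin d) F :=
  Matrix.of fun j k => c i j k

/-- `(C^j)_{ik} = c_{ij}^k`. -/
def Cright {d : ℕ} (c : Fin d → Fin d → Fin d → F) (j : Fin d) : Matrix (Fin d) (Fin d) F :=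
  Matrix.of fun i k => c i j k

/-- `(M_φ^η)_{ij} = φ C_i C^j η`. -/
def algMmesh {d : ℕ} (c : Fin d → Fin d → Fin d → F) (φ η : Fin d → F) :
    Matrix (Fin d) (Fin d) F :=
  Matrix.of fun i j => φ ⬝ᵥ (Cleft c i * Cright c j).mulVec η

/-- `(a_φ^η)_i = φ C_i η`. -/
def algAVec {d : ℕ} (c : Fin d → Fin d → Fin d → F) (φ η : Fin d → F) : Fin d → F :=
  fun i => φ ⬝ᵥ (Cleft c i).mulVec η

/-- `(b_φ^η)_j = φ C^j η`. -/
def algBVec {d : ℕ} (c : Fin d → Fin d → Fin d → F) (φ η : Fin d → F) : Fin d → F :=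
  fun j => φ ⬝ᵥ (Cright c j).mulVec η

/-- `φ` meshes with `η` (algebra-group version). -/
def algMeshes {d : ℕ} (c : Fin d → Fin d → Fin d → F) (φ η : Fin d → F) : Prop :=
  (∃ b : Fin d → F, (algMmesh c φ η).mulVec b = -algAVec c φ η) ∧
  ∀ v : Fin d → F, (algMmesh c φ η).mulVec v = 0 → algBVec c φ η ⬝ᵥ v = 0

set_option linter.unusedSectionVars false

section Aux

variable {F : Type*} [Field F] [Fintype F] [DecidableEq F] {n : ℕ}

/-- Extension of a function on `J` by zero. -/
def extJ (J : Finset (Pr n)) (σ : {p // p ∈ J} → F) : Pr n → F :=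
  fun p => if h : p ∈ J then σ ⟨p, h⟩ else 0

/-- The matrix with entries `extJ`. -/
def Ema (J : Finset (Pr n)) (σ : {p // p ∈ J} → F) : Matrix (Fin n) (Fin n) F :=
  Matrix.of fun i j => extJ J σ (i, j)

lemma extJ_not_mem {J : Finset (Pr n)} {σ : {p // p ∈ J} → F} {p : Pr n} (h : p ∉ J) :
    extJ J σ p = 0 := dif_neg h

lemma Ema_apply {J : Finset (Pr n)} {σ : {p // p ∈ J} → F} (i j : Fin n) :
    Ema J σ i j = extJ J σ (i, j) := rfl

/-- Support predicate. -/
def SuppJ (J : Finset (Pr n)) (X : Matrix (Fin n) (Fin n) F) : Prop :=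
  ∀ i j : Fin n, (i, j) ∉ J → X i j = 0

lemma suppJ_Ema (J : Finset (Pr n)) (σ : {p // p ∈ J} → F) : SuppJ J (Ema J σ) :=
  fun _ _ h => extJ_not_mem h

lemma suppJ_Xmat (J : Finset (Pr n)) (φ : Pr n → F) : SuppJ J (Xmat J φ) :=
  fun _ _ h => if_neg h

lemma suppJ_add {J : Finset (Pr n)} {X Y : Matrix (Fin n) (Fin n) F}
    (hX : SuppJ J X) (hY : SuppJ J Y) : SuppJ J (X + Y) := by
  intro i j h
  simp [Matrix.add_apply, hX i j h, hY i j h]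

lemma suppJ_mul {J : Finset (Pr n)} (hJ : Closed J) {X Y : Matrix (Fin n) (Fin n) F}
    (hX : SuppJ J X) (hY : SuppJ J Y) : SuppJ J (X * Y) := by
  intro i k h
  rw [Matrix.mul_apply]
  refine Finset.sum_eq_zero fun j _ => ?_
  by_cases h1 : (i, j) ∈ J
  · by_cases h2 : (j, k) ∈ J
    · exact absurd (hJ.2 i j k h1 h2) h
    · rw [hY j k h2, mul_zero]
  · rw [hX i j h1, zero_mul]

lemma not_diag_mem {J : Finset (Pr n)} (hJ : Closed J) (i : Fin n) : (i, i) ∉ J :=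
  fun h => lt_irrefl i (hJ.1 (i, i) h)

lemma suppJ_diag {J : Finset (Pr n)} (hJ : Closed J) {X : Matrix (Fin n) (Fin n) F}
    (hX : SuppJ J X) (i : Fin n) : X i i = 0 := hX i i (not_diag_mem hJ i)

/-- Powers of `J`-supported matrices vanish below the expected diagonal. -/
lemma pow_entry_zero {J : Finset (Pr n)} (hJ : Closed J) {N : Matrix (Fin n) (Fin n) F}
    (hN : SuppJ J N) : ∀ (k : ℕ) (i j : Fin n), (j : ℕ) < (i : ℕ) + k → (N ^ k) i j = 0 := by
  intro k
  induction k with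
  | zero =>
    intro i j hij
    rw [pow_zero]
    have hne : i ≠ j := by intro h; subst h; omega
    exact Matrix.one_apply_ne hne
  | succ k ih =>
    intro i j hij
    rw [pow_succ, Matrix.mul_apply]
    refine Finset.sum_eq_zero fun m _ => ?_
    by_cases hm : (m : ℕ) < (i : ℕ) + k
    · rw [ih i m hm, zero_mul]
    · by_cases h2 : (m, j) ∈ J
      · have hlt : (m : ℕ) < (j : ℕ) := hJ.1 (m, j) h2
        omega
      · rw [hN m j h2, mul_zero]

lemma pow_n_eq_zero {J : Finset (Pr n)} (hJ : Closed J) {N : Matrix (Fin n) (Fin n) F}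
    (hN : SuppJ J N) : N ^ n = 0 := by
  ext i j
  rw [Matrix.zero_apply]
  exact pow_entry_zero hJ hN n i j (by omega)

lemma isUnit_one_add_suppJ {J : Finset (Pr n)} (hJ : Closed J) {N : Matrix (Fin n) (Fin n) F}
    (hN : SuppJ J N) : IsUnit (1 + N) :=
  IsNilpotent.isUnit_one_add ⟨n, pow_n_eq_zero hJ hN⟩

end Aux
section Aux2
set_option linter.unusedSectionVars false
variable {F : Type*} [Field F] [Fintype F] [DecidableEq F] {n : ℕ}

lemma one_add_mem_UJ {J : Finset (Pr n)} (hJ : Closed J) {X : Matrix (Fin n) (Fin n) F}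
    (hX : SuppJ J X) : (1 + X) ∈ UJ J := by
  constructor
  · intro i
    simp [Matrix.add_apply, Matrix.one_apply, suppJ_diag hJ hX i]
  · intro i j hij hmem
    simp [Matrix.add_apply, Matrix.one_apply_ne hij, hX i j hmem]

lemma mem_UJ_eq {J : Finset (Pr n)} (hJ : Closed J) {M : Matrix (Fin n) (Fin n) F}
    (hM : M ∈ UJ J) : M = 1 + Ema J (fun x => M x.1.1 x.1.2) := by
  ext i j
  by_cases h : i = j
  · subst h
    simp [Matrix.add_apply, Matrix.one_apply, hM.1 i, Ema_apply,
      extJ_not_mem (not_diag_mem hJ i)]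
  · rw [Matrix.add_apply, Matrix.one_apply_ne h, Ema_apply]
    by_cases hmem : (i, j) ∈ J
    · rw [zero_add, extJ, dif_pos hmem]
    · rw [extJ_not_mem hmem, hM.2 i j h hmem, add_zero]

lemma Ema_inj {J : Finset (Pr n)} {σ τ : {p // p ∈ J} → F} (h : Ema J σ = Ema J τ) :
    σ = τ := by
  funext x
  have := congrFun (congrFun h x.1.1) x.1.2
  rw [Ema_apply, Ema_apply] at this
  simpa [extJ, x.2] using this

/-- product of two parametrized elements, in coordinates. -/
def mulP (J : Finset (Pr n)) (σ τ : {p // p ∈ J} → F) : {p // p ∈ J} → F :=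
  fun x => ((1 + Ema J σ) * (1 + Ema J τ)) x.1.1 x.1.2

lemma one_add_Ema_mul {J : Finset (Pr n)} (hJ : Closed J) (σ τ : {p // p ∈ J} → F) :
    (1 + Ema J σ) * (1 + Ema J τ) = 1 + Ema J (mulP J σ τ) := by
  have hsupp : SuppJ J (Ema J σ + Ema J τ + Ema J σ * Ema J τ) :=
    suppJ_add (suppJ_add (suppJ_Ema J σ) (suppJ_Ema J τ))
      (suppJ_mul hJ (suppJ_Ema J σ) (suppJ_Ema J τ))
  have hprod : (1 + Ema J σ) * (1 + Ema J τ)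
      = 1 + (Ema J σ + Ema J τ + Ema J σ * Ema J τ) := by
    noncomm_ring
  have hmem : (1 + Ema J σ) * (1 + Ema J τ) ∈ UJ J := by
    rw [hprod]; exact one_add_mem_UJ hJ hsupp
  exact mem_UJ_eq hJ hmem

lemma isUnit_one_add_Ema {J : Finset (Pr n)} (hJ : Closed J) (σ : {p // p ∈ J} → F) :
    IsUnit (1 + Ema J σ) := isUnit_one_add_suppJ hJ (suppJ_Ema J σ)

lemma mulP_left_bij {J : Finset (Pr n)} (hJ : Closed J) (σ0 : {p // p ∈ J} → F) :
    Function.Bijective (fun τ => mulP J σ0 τ) := by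
  rw [← Finite.injective_iff_bijective]
  intro τ τ' h
  have h2 : (1 + Ema J σ0) * (1 + Ema J τ) = (1 + Ema J σ0) * (1 + Ema J τ') := by
    rw [one_add_Ema_mul hJ, one_add_Ema_mul hJ]
    exact congrArg (fun f => 1 + Ema J f) h
  have h3 := (isUnit_one_add_Ema hJ σ0).mul_left_cancel h2
  have h4 : Ema J τ = Ema J τ' := by
    have := congrArg (fun M => M - 1) h3
    simpa using this
  exact Ema_inj h4

lemma mulP_right_bij {J : Finset (Pr n)} (hJ : Closed J) (τ0 : {p // p ∈ J} → F) :
    Function.Bijective (fun σ => mulP J σ τ0) := by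
  rw [← Finite.injective_iff_bijective]
  intro τ τ' h
  have h2 : (1 + Ema J τ) * (1 + Ema J τ0) = (1 + Ema J τ') * (1 + Ema J τ0) := by
    rw [one_add_Ema_mul hJ, one_add_Ema_mul hJ]
    exact congrArg (fun f => 1 + Ema J f) h
  have h3 := (isUnit_one_add_Ema hJ τ0).mul_right_cancel h2
  have h4 : Ema J τ = Ema J τ' := by
    have := congrArg (fun M => M - 1) h3
    simpa using this
  exact Ema_inj h4

end Aux2
section Aux3
set_option linter.unusedSectionVars false
variable {F : Type*} [Field F] [Fintype F] [DecidableEq F] {n : ℕ}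

lemma lam_eq_univ (J : Finset (Pr n)) (η : Pr n → F) (Y : Matrix (Fin n) (Fin n) F) :
    lam J η Y = ∑ p : Pr n, (if p ∈ J then η p else 0) * Y p.1 p.2 := by
  rw [lam, eq_comm]
  simp only [ite_mul, zero_mul, Finset.sum_ite_mem, Finset.univ_inter]

lemma lam_add (J : Finset (Pr n)) (η : Pr n → F) (X Y : Matrix (Fin n) (Fin n) F) :
    lam J η (X + Y) = lam J η X + lam J η Y := by
  simp [lam, Matrix.add_apply, mul_add, Finset.sum_add_distrib]

lemma dot_ext {J : Finset (Pr n)} (σ : {p // p ∈ J} → F) (W : Pr n → F) :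
    ∑ x : {p // p ∈ J}, σ x * W x.1 = ∑ p : Pr n, extJ J σ p * W p := by
  have h1 : ∑ x ∈ J.attach, σ x * W x.1 = ∑ x ∈ J.attach, extJ J σ x.1 * W x.1 :=
    Finset.sum_congr rfl fun x _ => by rw [extJ, dif_pos x.2]
  rw [Finset.univ_eq_attach, h1, Finset.sum_attach J (fun p => extJ J σ p * W p)]
  exact Finset.sum_subset (Finset.subset_univ J)
    (fun p _ hp => by rw [extJ_not_mem hp, zero_mul])

lemma lam_Xmat (J : Finset (Pr n)) (η φ : Pr n → F) :
    lam J η (Xmat J φ) = ∑ p ∈ J, η p * φ p := by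
  refine Finset.sum_congr rfl fun p hp => ?_
  have : Xmat J φ p.1 p.2 = φ p := by
    simp only [Xmat, Matrix.of_apply, Prod.mk.eta, if_pos hp]
  rw [this]

lemma lam_left {J : Finset (Pr n)} (hJ : Closed J) (σ : {p // p ∈ J} → F) (φ η : Pr n → F) :
    lam J η (Ema J σ * Xmat J φ) = σ ⬝ᵥ aVec J φ η := by
  have hdot : σ ⬝ᵥ aVec J φ η
      = ∑ p : Pr n, extJ J σ p *
          ∑ l, (if (p.2, l) ∈ J then φ (p.2, l) * η (p.1, l) else 0) :=
    dot_ext σ (fun q => ∑ l, (if (q.2, l) ∈ J then φ (q.2, l) * η (q.1, l) else 0))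
  rw [lam_eq_univ, hdot, Fintype.sum_prod_type, Fintype.sum_prod_type]
  refine Finset.sum_congr rfl fun i _ => ?_
  calc ∑ l, (if (i, l) ∈ J then η (i, l) else 0) * (Ema J σ * Xmat J φ) i l
      = ∑ l, ∑ j, extJ J σ (i, j) *
          ((if (j, l) ∈ J then φ (j, l) else 0) * (if (i, l) ∈ J then η (i, l) else 0)) := by
        refine Finset.sum_congr rfl fun l _ => ?_
        rw [Matrix.mul_apply, Finset.mul_sum]
        refine Finset.sum_congr rfl fun j _ => ?_
        simp only [Ema_apply, Xmat, Matrix.of_apply]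
        ring
    _ = ∑ j, ∑ l, extJ J σ (i, j) *
          ((if (j, l) ∈ J then φ (j, l) else 0) * (if (i, l) ∈ J then η (i, l) else 0)) :=
        Finset.sum_comm
    _ = ∑ j, extJ J σ (i, j) * ∑ l, (if (j, l) ∈ J then φ (j, l) * η (i, l) else 0) := by
        refine Finset.sum_congr rfl fun j _ => ?_
        rw [Finset.mul_sum]
        refine Finset.sum_congr rfl fun l _ => ?_
        by_cases h1 : (i, j) ∈ J
        · by_cases h2 : (j, l) ∈ J
          · rw [if_pos h2, if_pos h2, if_pos (hJ.2 i j l h1 h2)]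
          · simp [h2]
        · rw [extJ_not_mem h1, zero_mul, zero_mul]

lemma lam_right {J : Finset (Pr n)} (hJ : Closed J) (τ : {p // p ∈ J} → F) (φ η : Pr n → F) :
    lam J η (Xmat J φ * Ema J τ) = τ ⬝ᵥ bVec J φ η := by
  have hdot : τ ⬝ᵥ bVec J φ η
      = ∑ p : Pr n, extJ J τ p *
          ∑ i, (if (i, p.1) ∈ J then φ (i, p.1) * η (i, p.2) else 0) :=
    dot_ext τ (fun q => ∑ i, (if (i, q.1) ∈ J then φ (i, q.1) * η (i, q.2) else 0))
  rw [lam_eq_univ, hdot, Fintype.sum_prod_type, Fintype.sum_prod_type]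
  -- LHS : ∑ i, ∑ l, G (i,l) * (X * B) i l ; RHS : ∑ j, ∑ l, extτ (j,l) * ∑ i, [...]
  calc ∑ i, ∑ l, (if (i, l) ∈ J then η (i, l) else 0) * (Xmat J φ * Ema J τ) i l
      = ∑ i, ∑ l, ∑ j, extJ J τ (j, l) *
          ((if (i, j) ∈ J then φ (i, j) else 0) * (if (i, l) ∈ J then η (i, l) else 0)) := by
        refine Finset.sum_congr rfl fun i _ => Finset.sum_congr rfl fun l _ => ?_
        rw [Matrix.mul_apply, Finset.mul_sum]
        refine Finset.sum_congr rfl fun j _ => ?_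
        simp only [Ema_apply, Xmat, Matrix.of_apply]
        ring
    _ = ∑ i, ∑ j, ∑ l, extJ J τ (j, l) *
          ((if (i, j) ∈ J then φ (i, j) else 0) * (if (i, l) ∈ J then η (i, l) else 0)) :=
        Finset.sum_congr rfl fun i _ => Finset.sum_comm
    _ = ∑ j, ∑ i, ∑ l, extJ J τ (j, l) *
          ((if (i, j) ∈ J then φ (i, j) else 0) * (if (i, l) ∈ J then η (i, l) else 0)) :=
        Finset.sum_comm
    _ = ∑ j, ∑ l, ∑ i, extJ J τ (j, l) *
          ((if (i, j) ∈ J then φ (i, j) else 0) * (if (i, l) ∈ J then η (i, l) else 0)) :=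
        Finset.sum_congr rfl fun j _ => Finset.sum_comm
    _ = ∑ j, ∑ l, extJ J τ (j, l) * ∑ i, (if (i, j) ∈ J then φ (i, j) * η (i, l) else 0) := by
        refine Finset.sum_congr rfl fun j _ => Finset.sum_congr rfl fun l _ => ?_
        rw [Finset.mul_sum]
        refine Finset.sum_congr rfl fun i _ => ?_
        by_cases h1 : (j, l) ∈ J
        · by_cases h2 : (i, j) ∈ J
          · rw [if_pos h2, if_pos h2, if_pos (hJ.2 i j l h2 h1)]
          · simp [h2]
        · rw [extJ_not_mem h1, zero_mul, zero_mul]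

lemma lam_both {J : Finset (Pr n)} (hJ : Closed J) (σ τ : {p // p ∈ J} → F) (φ η : Pr n → F) :
    lam J η (Ema J σ * Xmat J φ * Ema J τ) = σ ⬝ᵥ (Mmesh J φ η).mulVec τ := by
  have hinner : ∀ x : {p // p ∈ J}, (Mmesh J φ η).mulVec τ x
      = ∑ q : Pr n, extJ J τ q *
          (if (x.1.2, q.1) ∈ J then φ (x.1.2, q.1) * η (x.1.1, q.2) else 0) := by
    intro x
    rw [Matrix.mulVec, dotProduct]
    have := dot_ext τ (fun q => if (x.1.2, q.1) ∈ J then φ (x.1.2, q.1) * η (x.1.1, q.2) else 0)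
    rw [← this]
    exact Finset.sum_congr rfl fun y _ => by rw [Mmesh, Matrix.of_apply]; ring
  have hdot : σ ⬝ᵥ (Mmesh J φ η).mulVec τ
      = ∑ p : Pr n, extJ J σ p * ∑ q : Pr n, extJ J τ q *
          (if (p.2, q.1) ∈ J then φ (p.2, q.1) * η (p.1, q.2) else 0) := by
    rw [dotProduct]
    rw [← dot_ext σ (fun p => ∑ q : Pr n, extJ J τ q *
          (if (p.2, q.1) ∈ J then φ (p.2, q.1) * η (p.1, q.2) else 0))]
    exact Finset.sum_congr rfl fun x _ => by rw [hinner x]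
  rw [lam_eq_univ, hdot, Fintype.sum_prod_type, Fintype.sum_prod_type]
  refine Finset.sum_congr rfl fun i _ => ?_
  -- LHS_i : ∑ l, G (i,l) * (A * X * B) i l
  -- RHS_i : ∑ j, extσ (i,j) * ∑ q : Pr n, extτ q * [...]
  calc ∑ l, (if (i, l) ∈ J then η (i, l) else 0) * (Ema J σ * Xmat J φ * Ema J τ) i l
      = ∑ l, ∑ k, ∑ j, extJ J σ (i, j) * (extJ J τ (k, l) *
          ((if (j, k) ∈ J then φ (j, k) else 0) * (if (i, l) ∈ J then η (i, l) else 0))) := by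
        refine Finset.sum_congr rfl fun l _ => ?_
        rw [Matrix.mul_apply, Finset.mul_sum]
        refine Finset.sum_congr rfl fun k _ => ?_
        rw [Matrix.mul_apply, Finset.sum_mul, Finset.mul_sum]
        refine Finset.sum_congr rfl fun j _ => ?_
        simp only [Ema_apply, Xmat, Matrix.of_apply]
        ring
    _ = ∑ l, ∑ j, ∑ k, extJ J σ (i, j) * (extJ J τ (k, l) *
          ((if (j, k) ∈ J then φ (j, k) else 0) * (if (i, l) ∈ J then η (i, l) else 0))) :=
        Finset.sum_congr rfl fun l _ => Finset.sum_comm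
    _ = ∑ j, ∑ l, ∑ k, extJ J σ (i, j) * (extJ J τ (k, l) *
          ((if (j, k) ∈ J then φ (j, k) else 0) * (if (i, l) ∈ J then η (i, l) else 0))) :=
        Finset.sum_comm
    _ = ∑ j, ∑ k, ∑ l, extJ J σ (i, j) * (extJ J τ (k, l) *
          ((if (j, k) ∈ J then φ (j, k) else 0) * (if (i, l) ∈ J then η (i, l) else 0))) :=
        Finset.sum_congr rfl fun j _ => Finset.sum_comm
    _ = ∑ j, extJ J σ (i, j) * ∑ q : Pr n, extJ J τ q *
          (if ((i, j).2, q.1) ∈ J then φ ((i, j).2, q.1) * η ((i, j).1, q.2) else 0) := by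
        refine Finset.sum_congr rfl fun j _ => ?_
        rw [Finset.mul_sum, Fintype.sum_prod_type]
        refine Finset.sum_congr rfl fun k _ => ?_
        refine Finset.sum_congr rfl fun l _ => ?_
        by_cases h1 : (i, j) ∈ J
        · by_cases h2 : (j, k) ∈ J
          · by_cases h3 : (k, l) ∈ J
            · rw [if_pos h2, if_pos h2, if_pos (hJ.2 i k l (hJ.2 i j k h1 h2) h3)]
            · rw [extJ_not_mem h3]; ring
          · simp [h2]
        · rw [extJ_not_mem h1, zero_mul, zero_mul]

end Aux3
section Aux4
set_option linter.unusedSectionVars false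
variable {F : Type*} [Field F] [Fintype F] [DecidableEq F]

lemma theta_exists_ne_one {θ : AddChar F ℂ} (hθ : θ ≠ 1) : ∃ s : F, θ s ≠ 1 :=
  AddChar.ne_one_iff.mp hθ

lemma theta_map_sum {θ : AddChar F ℂ} {ι : Type*} (s : Finset ι) (g : ι → F) :
    θ (∑ i ∈ s, g i) = ∏ i ∈ s, θ (g i) := by
  classical
  induction s using Finset.induction_on with
  | empty => simp
  | insert _ _ h ih => rw [Finset.sum_insert h, Finset.prod_insert h, AddChar.map_add_eq_mul, ih]

lemma sum_theta_dot {θ : AddChar F ℂ} (hθ : θ ≠ 1) {ι : Type*} [Fintype ι] [DecidableEq ι]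
    (w : ι → F) :
    ∑ σ : ι → F, θ (σ ⬝ᵥ w) =
      if w = 0 then ((Fintype.card F : ℂ) ^ Fintype.card ι) else 0 := by
  by_cases hw : w = 0
  · subst hw
    simp [dotProduct_zero, Fintype.card_fun]
  · rw [if_neg hw]
    obtain ⟨s, hs⟩ := theta_exists_ne_one hθ
    obtain ⟨p, hp0⟩ := Function.ne_iff.mp hw
    have hp : w p ≠ 0 := by simpa using hp0
    set σ1 : ι → F := Pi.single p (s * (w p)⁻¹) with hσ1
    have hdot : σ1 ⬝ᵥ w = s := by
      rw [hσ1, single_dotProduct, mul_assoc, inv_mul_cancel₀ hp, mul_one]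
    have key : ∑ σ : ι → F, θ (σ ⬝ᵥ w) = ∑ σ : ι → F, θ ((σ + σ1) ⬝ᵥ w) :=
      Fintype.sum_equiv (Equiv.subRight σ1) _ _ (fun σ => by simp)
    have key2 : ∑ σ : ι → F, θ ((σ + σ1) ⬝ᵥ w) = θ s * ∑ σ : ι → F, θ (σ ⬝ᵥ w) := by
      rw [Finset.mul_sum]
      refine Finset.sum_congr rfl fun σ _ => ?_
      rw [add_dotProduct, AddChar.map_add_eq_mul, hdot]
      ring
    have : (θ s - 1) * ∑ σ : ι → F, θ (σ ⬝ᵥ w) = 0 := by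
      rw [sub_mul, one_mul, ← key2, ← key, sub_self]
    rcases mul_eq_zero.mp this with h | h
    · exact absurd (sub_eq_zero.mp h) hs
    · exact h

lemma sum_theta_ker_eq_zero {θ : AddChar F ℂ} (hθ : θ ≠ 1) {ι : Type*} [Fintype ι]
    [DecidableEq ι] (M : Matrix ι ι F) (b : ι → F)
    (hv : ∃ v, M.mulVec v = 0 ∧ b ⬝ᵥ v ≠ 0) :
    ∑ v ∈ Finset.univ.filter (fun v => M.mulVec v = 0), θ (b ⬝ᵥ v) = 0 := by
  obtain ⟨s, hs⟩ := theta_exists_ne_one hθ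
  obtain ⟨v0, hv0, hbv0⟩ := hv
  set v1 : ι → F := (s * (b ⬝ᵥ v0)⁻¹) • v0 with hv1def
  have hv1ker : M.mulVec v1 = 0 := by
    rw [hv1def, Matrix.mulVec_smul, hv0, smul_zero]
  have hbv1 : b ⬝ᵥ v1 = s := by
    rw [hv1def, dotProduct_smul, smul_eq_mul]
    field_simp
  have key : ∑ v ∈ Finset.univ.filter (fun v => M.mulVec v = 0), θ (b ⬝ᵥ v)
      = ∑ v ∈ Finset.univ.filter (fun v => M.mulVec v = 0), θ (b ⬝ᵥ (v + v1)) := by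
    refine Finset.sum_nbij' (fun v => v - v1) (fun v => v + v1) ?_ ?_ ?_ ?_ ?_
    · intro a ha
      simp only [Finset.mem_filter, Finset.mem_univ, true_and] at ha ⊢
      rw [Matrix.mulVec_sub, ha, hv1ker, sub_zero]
    · intro a ha
      simp only [Finset.mem_filter, Finset.mem_univ, true_and] at ha ⊢
      rw [Matrix.mulVec_add, ha, hv1ker, add_zero]
    · intro a _; simp
    · intro a _; simp
    · intro a _; simp
  have key2 : ∑ v ∈ Finset.univ.filter (fun v => M.mulVec v = 0), θ (b ⬝ᵥ (v + v1))
      = θ s * ∑ v ∈ Finset.univ.filter (fun v => M.mulVec v = 0), θ (b ⬝ᵥ v) := by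
    rw [Finset.mul_sum]
    refine Finset.sum_congr rfl fun v _ => ?_
    rw [dotProduct_add, AddChar.map_add_eq_mul, hbv1]
    ring
  have : (θ s - 1) * ∑ v ∈ Finset.univ.filter (fun v => M.mulVec v = 0), θ (b ⬝ᵥ v) = 0 := by
    rw [sub_mul, one_mul, ← key2, ← key, sub_self]
  rcases mul_eq_zero.mp this with h | h
  · exact absurd (sub_eq_zero.mp h) hs
  · exact h

lemma sol_sum_eq {θ : AddChar F ℂ} {ι : Type*} [Fintype ι] [DecidableEq ι]
    (M : Matrix ι ι F) (a b b0 : ι → F) (hb0 : M.mulVec b0 = -a) :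
    ∑ τ ∈ Finset.univ.filter (fun τ => M.mulVec τ = -a), θ (τ ⬝ᵥ b)
      = θ (b0 ⬝ᵥ b) * ∑ v ∈ Finset.univ.filter (fun v => M.mulVec v = 0), θ (v ⬝ᵥ b) := by
  rw [Finset.mul_sum]
  refine Finset.sum_nbij' (fun τ => τ - b0) (fun v => v + b0) ?_ ?_ ?_ ?_ ?_
  · intro τ hτ
    simp only [Finset.mem_filter, Finset.mem_univ, true_and] at hτ ⊢
    rw [Matrix.mulVec_sub, hτ, hb0, sub_self]
  · intro v hv
    simp only [Finset.mem_filter, Finset.mem_univ, true_and] at hv ⊢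
    rw [Matrix.mulVec_add, hv, hb0, zero_add]
  · intro a _; simp
  · intro a _; simp
  · intro τ _
    rw [← AddChar.map_add_eq_mul, ← add_dotProduct, add_sub_cancel]

lemma ker_card_pow {ι : Type*} [Fintype ι] [DecidableEq ι] (M : Matrix ι ι F) :
    Fintype.card F ^ M.rank *
      (Finset.univ.filter (fun v => M.mulVec v = 0)).card
      = Fintype.card F ^ Fintype.card ι := by
  classical
  have h1 : (Finset.univ.filter (fun v => M.mulVec v = 0)).card
      = Fintype.card {v : ι → F // M.mulVec v = 0} := (Fintype.card_subtype _).symm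
  have e : {v : ι → F // M.mulVec v = 0} ≃ LinearMap.ker M.mulVecLin :=
    Equiv.subtypeEquivRight (fun v => by
      simp [LinearMap.mem_ker, Matrix.mulVecLin_apply])
  have h2 : Fintype.card {v : ι → F // M.mulVec v = 0}
      = Fintype.card (LinearMap.ker M.mulVecLin) := Fintype.card_congr e
  have h3 : Fintype.card (LinearMap.ker M.mulVecLin)
      = Fintype.card F ^ Module.finrank F (LinearMap.ker M.mulVecLin) :=
    Module.card_eq_pow_finrank
  have h4 : M.rank + Module.finrank F (LinearMap.ker M.mulVecLin) = Fintype.card ι := by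
    rw [Matrix.rank, LinearMap.finrank_range_add_finrank_ker M.mulVecLin, Module.finrank_pi]
  rw [h1, h2, h3, ← pow_add, h4]

end Aux4
section Aux5
set_option linter.unusedSectionVars false
variable {F : Type*} [Field F] [Fintype F] [DecidableEq F] {n : ℕ}

/-- The orbit map in coordinates. -/
def psiF (J : Finset (Pr n)) (φ : Pr n → F) :
    ({p // p ∈ J} → F) × ({p // p ∈ J} → F) → Matrix (Fin n) (Fin n) F :=
  fun x => (1 + Ema J x.1) * Xmat J φ * (1 + Ema J x.2)

/-- The orbit as a finset. -/
def Ofin (J : Finset (Pr n)) (φ : Pr n → F) : Finset (Matrix (Fin n) (Fin n) F) :=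
  Finset.image (psiF J φ) Finset.univ

/-- The common fiber cardinality. -/
def KK (J : Finset (Pr n)) (φ : Pr n → F) : ℕ :=
  (Finset.univ.filter fun x => psiF J φ x = Xmat J φ).card

lemma Ema_zero (J : Finset (Pr n)) : Ema J (0 : {p // p ∈ J} → F) = 0 := by
  ext i j
  rw [Ema_apply, Matrix.zero_apply, extJ]
  split <;> rfl

lemma psiF_zero (J : Finset (Pr n)) (φ : Pr n → F) : psiF J φ (0, 0) = Xmat J φ := by
  simp [psiF, Ema_zero]

lemma Xmat_mem_Ofin (J : Finset (Pr n)) (φ : Pr n → F) : Xmat J φ ∈ Ofin J φ := by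
  rw [Ofin, Finset.mem_image]
  exact ⟨(0, 0), Finset.mem_univ _, psiF_zero J φ⟩

lemma KK_pos (J : Finset (Pr n)) (φ : Pr n → F) : 0 < KK J φ := by
  rw [KK, Finset.card_pos]
  exact ⟨(0, 0), Finset.mem_filter.mpr ⟨Finset.mem_univ _, psiF_zero J φ⟩⟩

lemma biOrbit_coe {J : Finset (Pr n)} (hJ : Closed J) (φ : Pr n → F) :
    biOrbit J φ = ↑(Ofin J φ) := by
  ext Y
  simp only [biOrbit, Set.mem_setOf_eq, Finset.coe_image, Set.mem_image, Ofin,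
    Finset.mem_coe, Finset.mem_image, Finset.mem_univ, true_and]
  constructor
  · rintro ⟨u, v, hu, hv, rfl⟩
    refine ⟨(fun x => u x.1.1 x.1.2, fun x => v x.1.1 x.1.2), ?_⟩
    rw [psiF, ← mem_UJ_eq hJ hu, ← mem_UJ_eq hJ hv]
  · rintro ⟨x, rfl⟩
    exact ⟨1 + Ema J x.1, 1 + Ema J x.2, one_add_mem_UJ hJ (suppJ_Ema J x.1),
      one_add_mem_UJ hJ (suppJ_Ema J x.2), rfl⟩

lemma psiF_translate {J : Finset (Pr n)} (hJ : Closed J) (φ : Pr n → F)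
    (σ0 τ0 : {p // p ∈ J} → F) (x : ({p // p ∈ J} → F) × ({p // p ∈ J} → F)) :
    psiF J φ (mulP J σ0 x.1, mulP J x.2 τ0)
      = (1 + Ema J σ0) * psiF J φ x * (1 + Ema J τ0) := by
  rw [psiF, psiF, ← one_add_Ema_mul hJ, ← one_add_Ema_mul hJ]
  simp only [mul_assoc]

lemma fiber_card_const {J : Finset (Pr n)} (hJ : Closed J) (φ : Pr n → F)
    {Y : Matrix (Fin n) (Fin n) F} (hY : Y ∈ Ofin J φ) :
    (Finset.univ.filter fun x => psiF J φ x = Y).card = KK J φ := by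
  rw [Ofin, Finset.mem_image] at hY
  obtain ⟨x0, -, hx0⟩ := hY
  rw [KK, eq_comm]
  refine Finset.card_bij (fun x _ => (mulP J x0.1 x.1, mulP J x.2 x0.2)) ?_ ?_ ?_
  · intro x hx
    rw [Finset.mem_filter] at hx ⊢
    refine ⟨Finset.mem_univ _, ?_⟩
    rw [psiF_translate hJ φ x0.1 x0.2 x, hx.2, ← hx0, psiF]
  · intro x1 h1 x2 h2 heq
    rw [Prod.mk.injEq] at heq
    have e1 := (mulP_left_bij hJ x0.1).1 heq.1
    have e2 := (mulP_right_bij hJ x0.2).1 heq.2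
    exact Prod.ext e1 e2
  · intro y hy
    rw [Finset.mem_filter] at hy
    obtain ⟨σ, hσ0⟩ := (mulP_left_bij hJ x0.1).2 y.1
    obtain ⟨τ, hτ0⟩ := (mulP_right_bij hJ x0.2).2 y.2
    have hσ : mulP J x0.1 σ = y.1 := hσ0
    have hτ : mulP J τ x0.2 = y.2 := hτ0
    have htr := psiF_translate hJ φ x0.1 x0.2 (σ, τ)
    have hcanc : psiF J φ (σ, τ) = Xmat J φ := by
      have hY' : (1 + Ema J x0.1) * psiF J φ (σ, τ) * (1 + Ema J x0.2)
          = (1 + Ema J x0.1) * Xmat J φ * (1 + Ema J x0.2) := by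
        rw [← htr]
        show psiF J φ (mulP J x0.1 σ, mulP J τ x0.2) = _
        rw [hσ, hτ, show (y.1, y.2) = y from rfl, hy.2, ← hx0, psiF]
      have h1 : psiF J φ (σ, τ) * (1 + Ema J x0.2) = Xmat J φ * (1 + Ema J x0.2) := by
        refine (isUnit_one_add_Ema hJ x0.1).mul_left_cancel ?_
        rw [← mul_assoc, ← mul_assoc]
        exact hY'
      exact (isUnit_one_add_Ema hJ x0.2).mul_right_cancel h1
    refine ⟨(σ, τ), Finset.mem_filter.mpr ⟨Finset.mem_univ _, hcanc⟩, ?_⟩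
    show (mulP J x0.1 σ, mulP J τ x0.2) = y
    rw [hσ, hτ]

lemma sum_fiber {J : Finset (Pr n)} (hJ : Closed J) (φ : Pr n → F)
    (f : Matrix (Fin n) (Fin n) F → ℂ) :
    ∑ x : ({p // p ∈ J} → F) × ({p // p ∈ J} → F), f (psiF J φ x)
      = (KK J φ : ℂ) * ∑ Y ∈ Ofin J φ, f Y := by
  rw [Finset.sum_comp f (psiF J φ), Finset.mul_sum]
  refine Finset.sum_congr rfl fun Y hY => ?_
  rw [fiber_card_const hJ φ (by exact hY), nsmul_eq_mul]

lemma card_dom_eq {J : Finset (Pr n)} (hJ : Closed J) (φ : Pr n → F) :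
    (Fintype.card F) ^ Fintype.card {p // p ∈ J} * (Fintype.card F) ^ Fintype.card {p // p ∈ J}
      = KK J φ * (Ofin J φ).card := by
  have h := Finset.card_eq_sum_card_fiberwise
    (f := psiF J φ) (s := Finset.univ) (t := Ofin J φ)
    (fun x _ => Finset.mem_image_of_mem _ (Finset.mem_univ x))
  rw [Finset.card_univ, Fintype.card_prod, Fintype.card_fun] at h
  rw [h, Finset.sum_congr rfl (fun Y hY => fiber_card_const hJ φ hY), Finset.sum_const,
    smul_eq_mul, mul_comm]

end Aux5
section Aux6
set_option linter.unusedSectionVars false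
variable {F : Type*} [Field F] [Fintype F] [DecidableEq F] {n : ℕ}

lemma lam_psiF {J : Finset (Pr n)} (hJ : Closed J) (φ η : Pr n → F)
    (σ τ : {p // p ∈ J} → F) :
    lam J η (psiF J φ (σ, τ))
      = (∑ p ∈ J, η p * φ p + τ ⬝ᵥ bVec J φ η)
        + σ ⬝ᵥ (aVec J φ η + (Mmesh J φ η).mulVec τ) := by
  have hexp : psiF J φ (σ, τ)
      = Xmat J φ + Ema J σ * Xmat J φ + Xmat J φ * Ema J τ
        + Ema J σ * Xmat J φ * Ema J τ := by
    rw [psiF]; noncomm_ring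
  rw [hexp, lam_add, lam_add, lam_add, lam_Xmat, lam_left hJ, lam_right hJ, lam_both hJ,
    dotProduct_add]
  ring

lemma total_sum {J : Finset (Pr n)} (hJ : Closed J) (θ : AddChar F ℂ) (hθ : θ ≠ 1)
    (φ η : Pr n → F) :
    ∑ x : ({p // p ∈ J} → F) × ({p // p ∈ J} → F), θ (lam J η (psiF J φ x))
      = θ (∑ p ∈ J, η p * φ p) * (Fintype.card F : ℂ) ^ Fintype.card {p // p ∈ J} *
        ∑ τ ∈ Finset.univ.filter (fun τ => (Mmesh J φ η).mulVec τ = -aVec J φ η),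
          θ (τ ⬝ᵥ bVec J φ η) := by
  rw [Fintype.sum_prod_type, Finset.sum_comm]
  have step1 : ∀ τ : {p // p ∈ J} → F,
      ∑ σ : {p // p ∈ J} → F, θ (lam J η (psiF J φ (σ, τ)))
      = θ (∑ p ∈ J, η p * φ p + τ ⬝ᵥ bVec J φ η) *
        (if aVec J φ η + (Mmesh J φ η).mulVec τ = 0
          then (Fintype.card F : ℂ) ^ Fintype.card {p // p ∈ J} else 0) := by
    intro τ
    rw [← sum_theta_dot hθ (aVec J φ η + (Mmesh J φ η).mulVec τ), Finset.mul_sum]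
    refine Finset.sum_congr rfl fun σ _ => ?_
    rw [lam_psiF hJ φ η σ τ, AddChar.map_add_eq_mul]
  rw [Finset.sum_congr rfl (fun τ _ => step1 τ)]
  calc ∑ τ : {p // p ∈ J} → F, θ (∑ p ∈ J, η p * φ p + τ ⬝ᵥ bVec J φ η) *
        (if aVec J φ η + (Mmesh J φ η).mulVec τ = 0
          then (Fintype.card F : ℂ) ^ Fintype.card {p // p ∈ J} else 0)
      = ∑ τ : {p // p ∈ J} → F, (if (Mmesh J φ η).mulVec τ = -aVec J φ η
          then θ (∑ p ∈ J, η p * φ p + τ ⬝ᵥ bVec J φ η) *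
            (Fintype.card F : ℂ) ^ Fintype.card {p // p ∈ J} else 0) := by
        refine Finset.sum_congr rfl fun τ _ => ?_
        rw [mul_ite, mul_zero]
        refine if_congr ?_ rfl rfl
        rw [add_comm, add_eq_zero_iff_eq_neg]
    _ = ∑ τ ∈ Finset.univ.filter (fun τ => (Mmesh J φ η).mulVec τ = -aVec J φ η),
          θ (∑ p ∈ J, η p * φ p + τ ⬝ᵥ bVec J φ η) *
            (Fintype.card F : ℂ) ^ Fintype.card {p // p ∈ J} :=
        (Finset.sum_filter _ _).symm
    _ = _ := by
        rw [Finset.mul_sum]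
        refine Finset.sum_congr rfl fun τ _ => ?_
        rw [AddChar.map_add_eq_mul]
        ring

lemma theta_prod_eq {J : Finset (Pr n)} (θ : AddChar F ℂ) (φ η : Pr n → F) :
    θ (∑ p ∈ J, η p * φ p)
      = ∏ p ∈ J.filter (fun p => φ p ≠ 0 ∧ η p ≠ 0), θ (φ p * η p) := by
  rw [theta_map_sum]
  rw [eq_comm]
  have h1 : ∀ p ∈ J.filter (fun p => φ p ≠ 0 ∧ η p ≠ 0), θ (φ p * η p) = θ (η p * φ p) := by
    intro p _; rw [mul_comm]
  rw [Finset.prod_congr rfl h1]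
  refine Finset.prod_filter_of_ne fun p _ hne => ?_
  by_contra hc
  rw [not_and_or] at hc
  rcases hc with h | h
  · rw [not_not] at h; rw [h, mul_zero, AddChar.map_zero_eq_one] at hne; exact hne rfl
  · rw [not_not] at h; rw [h, zero_mul, AddChar.map_zero_eq_one] at hne; exact hne rfl

end Aux6
theorem stmt12 {F : Type*} [Field F] [Fintype F] [DecidableEq F] {n : ℕ}
    (J : Finset (Pr n)) (hJ : Closed J)
    (θ : AddChar F ℂ) (hθ : θ ≠ 1) (φ η : Pr n → F) :
    (Meshes J φ η →
      ∀ b0 : {p // p ∈ J} → F, (Mmesh J φ η).mulVec b0 = -aVec J φ η →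
        (starRingEnd ℂ) (superchar J θ η φ) =
          ((Fintype.card F : ℂ) ^ corank J η / (Fintype.card F : ℂ) ^ (Mmesh J φ η).rank) *
            θ (b0 ⬝ᵥ bVec J φ η) *
            ∏ p ∈ J.filter (fun p => φ p ≠ 0 ∧ η p ≠ 0), θ (φ p * η p)) ∧
    (¬ Meshes J φ η → superchar J θ η φ = 0) := by
  classical
  have hq0 : (Fintype.card F : ℂ) ≠ 0 := Nat.cast_ne_zero.mpr Fintype.card_pos.ne'
  have hNatcard : (Nat.card (biOrbit J φ) : ℂ) = ((Ofin J φ).card : ℂ) := by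
    rw [biOrbit_coe hJ φ, Nat.card_coe_set_eq, Set.ncard_coe_finset]
  have hchar : superchar J θ η φ
      = (((Fintype.card F : ℂ) ^ corank J η) / ((Ofin J φ).card : ℂ)) *
        ∑ Y ∈ Ofin J φ, (starRingEnd ℂ) (θ (lam J η Y)) := by
    rw [superchar, hNatcard, biOrbit_coe hJ φ, finsum_mem_coe_finset]
  have hconj : (starRingEnd ℂ) (superchar J θ η φ)
      = (((Fintype.card F : ℂ) ^ corank J η) / ((Ofin J φ).card : ℂ)) *
        ∑ Y ∈ Ofin J φ, θ (lam J η Y) := by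
    rw [hchar, _root_.map_mul, map_div₀, map_pow, map_sum]
    congr 1
    · rw [map_natCast, map_natCast]
    · exact Finset.sum_congr rfl fun Y _ => Complex.conj_conj _
  have hfiber := sum_fiber hJ φ (fun Y => θ (lam J η Y))
  have htotal := total_sum hJ θ hθ φ η
  have hsum' : (KK J φ : ℂ) * ∑ Y ∈ Ofin J φ, θ (lam J η Y)
      = θ (∑ p ∈ J, η p * φ p) * (Fintype.card F : ℂ) ^ Fintype.card {p // p ∈ J} *
        ∑ τ ∈ Finset.univ.filter (fun τ => (Mmesh J φ η).mulVec τ = -aVec J φ η),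
          θ (τ ⬝ᵥ bVec J φ η) := by
    rw [← hfiber, htotal]
  have hK0 : (KK J φ : ℂ) ≠ 0 := Nat.cast_ne_zero.mpr (KK_pos J φ).ne'
  have hO0 : ((Ofin J φ).card : ℂ) ≠ 0 := by
    refine Nat.cast_ne_zero.mpr (Finset.card_pos.mpr ⟨Xmat J φ, Xmat_mem_Ofin J φ⟩).ne'
  constructor
  · -- meshing case
    intro hm b0 hb0
    have hker1 : ∀ v ∈ Finset.univ.filter
        (fun v => (Mmesh J φ η).mulVec v = 0), θ (v ⬝ᵥ bVec J φ η) = 1 := by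
      intro v hv
      rw [Finset.mem_filter] at hv
      have := hm.2 v hv.2
      rw [dotProduct_comm] at this
      rw [this, AddChar.map_zero_eq_one]
    have hsol : ∑ τ ∈ Finset.univ.filter
          (fun τ => (Mmesh J φ η).mulVec τ = -aVec J φ η), θ (τ ⬝ᵥ bVec J φ η)
        = θ (b0 ⬝ᵥ bVec J φ η) *
          ((Finset.univ.filter (fun v => (Mmesh J φ η).mulVec v = 0)).card : ℂ) := by
      rw [sol_sum_eq (Mmesh J φ η) (aVec J φ η) (bVec J φ η) b0 hb0,
        Finset.sum_congr rfl hker1, Finset.sum_const, nsmul_eq_mul, mul_one]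
    have hkerpow : (Fintype.card F : ℂ) ^ (Mmesh J φ η).rank *
        (((Finset.univ.filter (fun v => (Mmesh J φ η).mulVec v = 0)).card : ℂ))
        = (Fintype.card F : ℂ) ^ Fintype.card {p // p ∈ J} := by
      have := ker_card_pow (Mmesh J φ η)
      exact_mod_cast congrArg (Nat.cast : ℕ → ℂ) this
    have hcard : ((KK J φ : ℂ)) * ((Ofin J φ).card : ℂ)
        = (Fintype.card F : ℂ) ^ Fintype.card {p // p ∈ J} *
          (Fintype.card F : ℂ) ^ Fintype.card {p // p ∈ J} := by
      have := card_dom_eq hJ φ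
      exact_mod_cast (congrArg (Nat.cast : ℕ → ℂ) this).symm
    rw [hconj]
    rw [theta_prod_eq θ φ η] at hsum'
    set P := ∏ p ∈ J.filter (fun p => φ p ≠ 0 ∧ η p ≠ 0), θ (φ p * η p) with hP
    set B := θ (b0 ⬝ᵥ bVec J φ η) with hB
    set S := ∑ Y ∈ Ofin J φ, θ (lam J η Y) with hS
    set qD := (Fintype.card F : ℂ) ^ Fintype.card {p // p ∈ J} with hqD
    set qc := (Fintype.card F : ℂ) ^ corank J η with hqc
    set qr := (Fintype.card F : ℂ) ^ (Mmesh J φ η).rank with hqr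
    set KC := (((Finset.univ.filter (fun v => (Mmesh J φ η).mulVec v = 0)).card : ℂ)) with hKC
    set K := (KK J φ : ℂ) with hK
    set OC := ((Ofin J φ).card : ℂ) with hOC
    rw [hsol] at hsum'
    -- hsum' : K * S = P * qD * (B * KC); hcard : K * OC = qD * qD ; hkerpow : qr * KC = qD
    -- goal : qc / OC * S = qc / qr * B * P
    have hqr0 : qr ≠ 0 := pow_ne_zero _ hq0
    have hmain : (K * OC * qr) * (qc / OC * S) = (K * OC * qr) * (qc / qr * B * P) := by
      have e1 : qc / OC * OC = qc := div_mul_cancel₀ qc hO0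
      have e2 : qc / qr * qr = qc := div_mul_cancel₀ qc hqr0
      linear_combination (K * qr * S) * e1 - (K * OC * B * P) * e2 + (qc * qr) * hsum'
        + (qc * P * qD * B) * hkerpow - (qc * B * P) * hcard
    exact mul_left_cancel₀ (by
      exact mul_ne_zero (mul_ne_zero hK0 hO0) hqr0) hmain
  · -- non-meshing case
    intro hnm
    have hsol0 : ∑ τ ∈ Finset.univ.filter
        (fun τ => (Mmesh J φ η).mulVec τ = -aVec J φ η), θ (τ ⬝ᵥ bVec J φ η) = 0 := by
      by_cases hex : ∃ b : {p // p ∈ J} → F, (Mmesh J φ η).mulVec b = -aVec J φ η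
      · obtain ⟨b0, hb0⟩ := hex
        have hB : ¬ ∀ v : {p // p ∈ J} → F,
            (Mmesh J φ η).mulVec v = 0 → bVec J φ η ⬝ᵥ v = 0 :=
          fun hB => hnm ⟨⟨b0, hb0⟩, hB⟩
        push_neg at hB
        obtain ⟨v, hv0, hbv⟩ := hB
        rw [sol_sum_eq (Mmesh J φ η) (aVec J φ η) (bVec J φ η) b0 hb0]
        have hker : ∑ v ∈ Finset.univ.filter
            (fun v => (Mmesh J φ η).mulVec v = 0), θ (v ⬝ᵥ bVec J φ η) = 0 := by
          have h := sum_theta_ker_eq_zero hθ (Mmesh J φ η) (bVec J φ η) ⟨v, hv0, hbv⟩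
          rw [← h]
          exact Finset.sum_congr rfl fun u _ => by rw [dotProduct_comm]
        rw [hker, mul_zero]
      · push_neg at hex
        rw [Finset.filter_eq_empty_iff.mpr (fun τ _ => hex τ), Finset.sum_empty]
    have hS0 : ∑ Y ∈ Ofin J φ, θ (lam J η Y) = 0 := by
      have := hsum'
      rw [hsol0, mul_zero] at this
      exact (mul_eq_zero.mp this).resolve_left hK0
    have hSconj : ∑ Y ∈ Ofin J φ, (starRingEnd ℂ) (θ (lam J η Y)) = 0 := by
      rw [← map_sum, hS0, map_zero]
    rw [hchar, hSconj, mul_zero]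

end SCT
end

section
/- Let H = 1 + 𝔫 be an algebra group with dim_{𝔽_q} 𝔫 = d, with fixed basis X_1,…,X_d of 𝔫 and structure constants X_i X_j = Σ_k c_{ij}^k X_k. Let φ, η ∈ 𝔽_q^d. If φ meshes with η, then the complex conjugate of χ^η(x_φ) equals q^{corank(η) − rank(M_φ^η)} · θ(b_0 · b_φ^η) · Π_{i=1}^d θ(φ_i η_i), where b_0 ∈ 𝔽_q^d is any solution of M_φ^η b_0 = −a_φ^η; if φ does not mesh with η, then χ^η(x_φ) = 0. -/
open Matrix BigOperators

namespace SCT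

variable {F : Type*} [Field F] [Fintype F] [DecidableEq F] {n : ℕ}

/-! ### Auxiliary machinery for the proof of Statement 17 -/

set_option linter.unusedSectionVars false

section Aux

variable {F : Type*} [Field F] [Fintype F] [DecidableEq F] {n d : ℕ}

/-- Coefficients of the product `X_a X_b` with respect to the basis. -/
def mcf (c : Fin d → Fin d → Fin d → F) (a b : Fin d → F) : Fin d → F :=
  fun k => ∑ i : Fin d, ∑ j : Fin d, a i * b j * c i j k

variable {Xb : Fin d → Matrix (Fin n) (Fin n) F} {c : Fin d → Fin d → Fin d → F}

lemma bigX_add (a b : Fin d → F) : bigX Xb (a + b) = bigX Xb a + bigX Xb b := by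
  simp [bigX, add_smul, Finset.sum_add_distrib]

lemma bigX_zero : bigX Xb (0 : Fin d → F) = 0 := by simp [bigX]

lemma bigX_smul (t : F) (a : Fin d → F) : bigX Xb (t • a) = t • bigX Xb a := by
  simp [bigX, smul_smul, Finset.smul_sum]

lemma bigX_sum {ι : Type*} (s : Finset ι) (f : ι → Fin d → F) :
    bigX Xb (∑ i ∈ s, f i) = ∑ i ∈ s, bigX Xb (f i) := by
  classical
  induction s using Finset.induction with
  | empty => simp [bigX_zero]
  | insert _ _ h ih => rw [Finset.sum_insert h, Finset.sum_insert h, bigX_add, ih]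

lemma bigX_mc (hc : ∀ i j : Fin d, Xb i * Xb j = ∑ k : Fin d, c i j k • Xb k)
    (a b : Fin d → F) : bigX Xb (mcf c a b) = bigX Xb a * bigX Xb b := by
  unfold bigX mcf
  rw [Finset.sum_mul_sum]
  simp only [smul_mul_smul_comm, hc, Finset.smul_sum, smul_smul, Finset.sum_smul]
  rw [Finset.sum_comm]
  exact Finset.sum_congr rfl fun i _ => Finset.sum_comm

lemma bigX_inj (hli : LinearIndependent F Xb) {a b : Fin d → F}
    (h : bigX Xb a = bigX Xb b) : a = b := by
  have h0 : ∑ i : Fin d, (a - b) i • Xb i = 0 := by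
    simp only [Pi.sub_apply, sub_smul, Finset.sum_sub_distrib]
    rw [show (∑ i : Fin d, a i • Xb i) = bigX Xb a from rfl,
      show (∑ i : Fin d, b i • Xb i) = bigX Xb b from rfl, h, sub_self]
  have := Fintype.linearIndependent_iff.mp hli (a - b) h0
  funext i
  have hi := this i
  simpa [sub_eq_zero] using hi

lemma strict_upper_pow_eq_zero {M : Matrix (Fin n) (Fin n) F}
    (h : ∀ i j : Fin n, j ≤ i → M i j = 0) : M ^ n = 0 := by
  have key : ∀ k : ℕ, ∀ i j : Fin n, (j : ℕ) < (i : ℕ) + k → (M ^ k) i j = 0 := by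
    intro k
    induction k with
    | zero =>
      intro i j h'
      rw [pow_zero]
      have hij : i ≠ j := by
        intro hij
        rw [hij] at h'
        omega
      exact Matrix.one_apply_ne hij
    | succ k ih =>
      intro i j h'
      rw [pow_succ, Matrix.mul_apply]
      apply Finset.sum_eq_zero
      intro l _
      by_cases hl : j ≤ l
      · rw [h l j hl, mul_zero]
      · rw [ih i l (by
          have : (l : ℕ) < (j : ℕ) := Fin.lt_iff_val_lt_val.mp (not_le.mp hl)
          omega), zero_mul]
  ext i j
  have := key n i j (by omega)
  simpa using this

lemma bigX_upper (hupper : ∀ i : Fin d, ∀ a b : Fin n, b ≤ a → Xb i a b = 0)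
    (a : Fin d → F) : ∀ i j : Fin n, j ≤ i → bigX Xb a i j = 0 := by
  intro i j hij
  simp [bigX, Matrix.sum_apply, hupper _ _ _ hij]

lemma bigX_pow_eq_zero (hupper : ∀ i : Fin d, ∀ a b : Fin n, b ≤ a → Xb i a b = 0)
    (a : Fin d → F) : bigX Xb a ^ n = 0 :=
  strict_upper_pow_eq_zero (bigX_upper hupper a)

/-- Coefficients of powers: `bigX (pc c a k) = (bigX a) ^ (k+1)`. -/
def pcf (c : Fin d → Fin d → Fin d → F) (a : Fin d → F) : ℕ → (Fin d → F)
  | 0 => a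
  | (k + 1) => mcf c (pcf c a k) a

lemma bigX_pc (hc : ∀ i j : Fin d, Xb i * Xb j = ∑ k : Fin d, c i j k • Xb k)
    (a : Fin d → F) : ∀ k : ℕ, bigX Xb (pcf c a k) = (bigX Xb a) ^ (k + 1) := by
  intro k
  induction k with
  | zero => simp [pcf]
  | succ k ih => rw [pcf, bigX_mc hc, ih, ← pow_succ]

/-- Coefficients of the inverse of `1 + X_a`. -/
def invc (n : ℕ) (c : Fin d → Fin d → Fin d → F) (a : Fin d → F) : Fin d → F :=
  ∑ k ∈ Finset.range n, ((-1 : F) ^ (k + 1)) • pcf c a k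

lemma one_add_bigX_invc (hc : ∀ i j : Fin d, Xb i * Xb j = ∑ k : Fin d, c i j k • Xb k)
    (hupper : ∀ i : Fin d, ∀ a b : Fin n, b ≤ a → Xb i a b = 0) (a : Fin d → F) :
    1 + bigX Xb (invc n c a) = ∑ k ∈ Finset.range (n + 1), (-(bigX Xb a)) ^ k := by
  rw [Finset.sum_range_succ']
  simp only [pow_zero]
  rw [invc, bigX_sum]
  have : ∀ k : ℕ, (-(bigX Xb a)) ^ (k + 1) = bigX Xb (((-1 : F) ^ (k + 1)) • pcf c a k) := by
    intro k
    rw [bigX_smul, bigX_pc hc,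
      show -(bigX Xb a) = (-1 : F) • bigX Xb a by simp, smul_pow]
  simp only [this]
  rw [add_comm]

lemma invc_mul (hc : ∀ i j : Fin d, Xb i * Xb j = ∑ k : Fin d, c i j k • Xb k)
    (hupper : ∀ i : Fin d, ∀ a b : Fin n, b ≤ a → Xb i a b = 0) (a : Fin d → F) :
    (1 + bigX Xb (invc n c a)) * (1 + bigX Xb a) = 1 := by
  rw [one_add_bigX_invc hc hupper]
  have hgs := geom_sum_mul (-(bigX Xb a)) (n + 1)
  have hz : (-(bigX Xb a)) ^ (n + 1) = 0 := by
    rw [pow_succ']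
    rw [show (-(bigX Xb a)) ^ n = (-1 : F) ^ n • (bigX Xb a) ^ n by
      rw [show -(bigX Xb a) = (-1 : F) • bigX Xb a by simp, smul_pow]]
    rw [bigX_pow_eq_zero hupper, smul_zero, mul_zero]
  rw [hz, zero_sub] at hgs
  calc (∑ k ∈ Finset.range (n + 1), (-(bigX Xb a)) ^ k) * (1 + bigX Xb a)
      = -((∑ k ∈ Finset.range (n + 1), (-(bigX Xb a)) ^ k) * (-(bigX Xb a) - 1)) := by
        noncomm_ring
    _ = -(-1) := by rw [hgs]
    _ = 1 := neg_neg 1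

lemma mul_invc (hc : ∀ i j : Fin d, Xb i * Xb j = ∑ k : Fin d, c i j k • Xb k)
    (hupper : ∀ i : Fin d, ∀ a b : Fin n, b ≤ a → Xb i a b = 0) (a : Fin d → F) :
    (1 + bigX Xb a) * (1 + bigX Xb (invc n c a)) = 1 := by
  rw [one_add_bigX_invc hc hupper]
  have hgs := mul_geom_sum (-(bigX Xb a)) (n + 1)
  have hz : (-(bigX Xb a)) ^ (n + 1) = 0 := by
    rw [pow_succ']
    rw [show (-(bigX Xb a)) ^ n = (-1 : F) ^ n • (bigX Xb a) ^ n by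
      rw [show -(bigX Xb a) = (-1 : F) • bigX Xb a by simp, smul_pow]]
    rw [bigX_pow_eq_zero hupper, smul_zero, mul_zero]
  rw [hz, zero_sub] at hgs
  calc (1 + bigX Xb a) * (∑ k ∈ Finset.range (n + 1), (-(bigX Xb a)) ^ k)
      = -((-(bigX Xb a) - 1) * (∑ k ∈ Finset.range (n + 1), (-(bigX Xb a)) ^ k)) := by
        noncomm_ring
    _ = -(-1) := by rw [hgs]
    _ = 1 := neg_neg 1

/-- Coefficients of `(1 + X_a)(1 + X_b) - 1`. -/
def m1f (c : Fin d → Fin d → Fin d → F) (a b : Fin d → F) : Fin d → F :=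
  a + b + mcf c a b

lemma m1_spec (hc : ∀ i j : Fin d, Xb i * Xb j = ∑ k : Fin d, c i j k • Xb k)
    (a b : Fin d → F) :
    1 + bigX Xb (m1f c a b) = (1 + bigX Xb a) * (1 + bigX Xb b) := by
  rw [m1f, bigX_add, bigX_add, bigX_mc hc]
  noncomm_ring

/-- Coefficients of `(1 + X_{z.1}) X_φ (1 + X_{z.2})`. -/
def rhof (c : Fin d → Fin d → Fin d → F) (φ : Fin d → F)
    (z : (Fin d → F) × (Fin d → F)) : Fin d → F :=
  (φ + mcf c z.1 φ) + mcf c (φ + mcf c z.1 φ) z.2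

lemma rho_spec (hc : ∀ i j : Fin d, Xb i * Xb j = ∑ k : Fin d, c i j k • Xb k)
    (φ : Fin d → F) (z : (Fin d → F) × (Fin d → F)) :
    (1 + bigX Xb z.1) * bigX Xb φ * (1 + bigX Xb z.2) = bigX Xb (rhof c φ z) := by
  simp only [rhof, bigX_add, bigX_mc hc]
  noncomm_ring

lemma rho_zero (hc : ∀ i j : Fin d, Xb i * Xb j = ∑ k : Fin d, c i j k • Xb k)
    (hli : LinearIndependent F Xb) (φ : Fin d → F) :
    rhof c φ (0, 0) = φ := by
  apply bigX_inj hli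
  rw [← rho_spec hc]
  simp [bigX_zero]

lemma mem_orbit_iff (hc : ∀ i j : Fin d, Xb i * Xb j = ∑ k : Fin d, c i j k • Xb k)
    (hli : LinearIndependent F Xb) (φ ρ : Fin d → F) :
    ρ ∈ algCoeffBiOrbit Xb φ ↔ ∃ z : (Fin d → F) × (Fin d → F), rhof c φ z = ρ := by
  constructor
  · rintro ⟨ζ₁, ζ₂, h⟩
    exact ⟨(ζ₁, ζ₂), bigX_inj hli ((rho_spec hc φ (ζ₁, ζ₂)).symm.trans h)⟩
  · rintro ⟨z, rfl⟩
    exact ⟨z.1, z.2, rho_spec hc φ z⟩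

lemma cancel_left (hc : ∀ i j : Fin d, Xb i * Xb j = ∑ k : Fin d, c i j k • Xb k)
    (hli : LinearIndependent F Xb) {u v : Fin d → F}
    (huv : (1 + bigX Xb u) * (1 + bigX Xb v) = 1) (b : Fin d → F) :
    m1f c u (m1f c v b) = b := by
  apply bigX_inj hli
  have h : 1 + bigX Xb (m1f c u (m1f c v b)) = 1 + bigX Xb b := by
    rw [m1_spec hc, m1_spec hc, ← mul_assoc, huv, one_mul]
  exact add_left_cancel h

lemma cancel_right (hc : ∀ i j : Fin d, Xb i * Xb j = ∑ k : Fin d, c i j k • Xb k)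
    (hli : LinearIndependent F Xb) {u v : Fin d → F}
    (huv : (1 + bigX Xb u) * (1 + bigX Xb v) = 1) (b : Fin d → F) :
    m1f c (m1f c b u) v = b := by
  apply bigX_inj hli
  have h : 1 + bigX Xb (m1f c (m1f c b u) v) = 1 + bigX Xb b := by
    rw [m1_spec hc, m1_spec hc, mul_assoc, huv, mul_one]
  exact add_left_cancel h

lemma rho_m1 (hc : ∀ i j : Fin d, Xb i * Xb j = ∑ k : Fin d, c i j k • Xb k)
    (hli : LinearIndependent F Xb) (φ u v : Fin d → F)
    (z : (Fin d → F) × (Fin d → F)) :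
    rhof c φ (m1f c u z.1, m1f c z.2 v) = rhof c (rhof c φ z) (u, v) := by
  apply bigX_inj hli
  rw [← rho_spec hc, ← rho_spec hc, ← rho_spec hc]
  simp only [m1_spec hc]
  noncomm_ring

lemma fiber_card (hc : ∀ i j : Fin d, Xb i * Xb j = ∑ k : Fin d, c i j k • Xb k)
    (hupper : ∀ i : Fin d, ∀ a b : Fin n, b ≤ a → Xb i a b = 0)
    (hli : LinearIndependent F Xb) (φ : Fin d → F)
    (w : (Fin d → F) × (Fin d → F)) :
    (Finset.univ.filter fun z : (Fin d → F) × (Fin d → F) => rhof c φ z = rhof c φ w).card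
      = (Finset.univ.filter fun z : (Fin d → F) × (Fin d → F) => rhof c φ z = φ).card := by
  classical
  have hinv1 : (1 + bigX Xb (invc n c w.1)) * (1 + bigX Xb w.1) = 1 := invc_mul hc hupper w.1
  have hinv1' : (1 + bigX Xb w.1) * (1 + bigX Xb (invc n c w.1)) = 1 := mul_invc hc hupper w.1
  have hinv2 : (1 + bigX Xb (invc n c w.2)) * (1 + bigX Xb w.2) = 1 := invc_mul hc hupper w.2
  have hinv2' : (1 + bigX Xb w.2) * (1 + bigX Xb (invc n c w.2)) = 1 := mul_invc hc hupper w.2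
  symm
  apply Finset.card_bij'
    (i := fun z _ => (m1f c w.1 z.1, m1f c z.2 w.2))
    (j := fun z _ => (m1f c (invc n c w.1) z.1, m1f c z.2 (invc n c w.2)))
  · intro z hz
    rw [Finset.mem_filter] at hz ⊢
    refine ⟨Finset.mem_univ _, ?_⟩
    rw [rho_m1 hc hli, hz.2]
  · intro z hz
    rw [Finset.mem_filter] at hz ⊢
    refine ⟨Finset.mem_univ _, ?_⟩
    rw [rho_m1 hc hli, hz.2]
    apply bigX_inj hli
    rw [← rho_spec hc]
    simp only [← rho_spec hc φ w]
    calc (1 + bigX Xb (invc n c w.1)) * ((1 + bigX Xb w.1) * bigX Xb φ * (1 + bigX Xb w.2)) *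
          (1 + bigX Xb (invc n c w.2))
        = ((1 + bigX Xb (invc n c w.1)) * (1 + bigX Xb w.1)) * bigX Xb φ *
          ((1 + bigX Xb w.2) * (1 + bigX Xb (invc n c w.2))) := by noncomm_ring
      _ = bigX Xb φ := by rw [hinv1, hinv2', one_mul, mul_one]
  · intro z hz
    exact Prod.ext (cancel_left hc hli hinv1 z.1) (cancel_right hc hli hinv2' z.2)
  · intro z hz
    exact Prod.ext (cancel_left hc hli hinv1' z.1) (cancel_right hc hli hinv2 z.2)

lemma dot_mcf (η a b : Fin d → F) :
    η ⬝ᵥ mcf c a b = ∑ i : Fin d, ∑ j : Fin d, a i * b j * (∑ k : Fin d, c i j k * η k) := by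
  simp only [dotProduct, mcf, Finset.mul_sum, Finset.sum_mul]
  rw [Finset.sum_comm]
  refine Finset.sum_congr rfl fun i _ => ?_
  rw [Finset.sum_comm]
  exact Finset.sum_congr rfl fun j _ => Finset.sum_congr rfl fun k _ => by ring

lemma dot_mc_left (η φ ζ : Fin d → F) : η ⬝ᵥ mcf c ζ φ = ζ ⬝ᵥ algAVec c φ η := by
  rw [dot_mcf]
  simp only [dotProduct, algAVec, Cleft, Matrix.mulVec, Matrix.of_apply, Finset.mul_sum]
  exact Finset.sum_congr rfl fun i _ => Finset.sum_congr rfl fun j _ =>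
    Finset.sum_congr rfl fun k _ => by ring

lemma dot_mc_right (η φ ζ : Fin d → F) : η ⬝ᵥ mcf c φ ζ = ζ ⬝ᵥ algBVec c φ η := by
  rw [dot_mcf]
  simp only [dotProduct, algBVec, Cright, Matrix.mulVec, Matrix.of_apply, Finset.mul_sum]
  rw [Finset.sum_comm]
  exact Finset.sum_congr rfl fun j _ => Finset.sum_congr rfl fun i _ =>
    Finset.sum_congr rfl fun k _ => by ring

lemma algMmesh_eq (φ η : Fin d → F) (i j : Fin d) :
    algMmesh c φ η i j = algAVec c φ ((Cright c j).mulVec η) i := by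
  simp [algMmesh, algAVec, Matrix.mulVec_mulVec]

lemma dot_mc_double (η φ ζ₁ ζ₂ : Fin d → F) :
    η ⬝ᵥ mcf c (mcf c ζ₁ φ) ζ₂ = ζ₁ ⬝ᵥ (algMmesh c φ η).mulVec ζ₂ := by
  rw [dot_mc_right]
  have h : ∀ j, algBVec c (mcf c ζ₁ φ) η j = ∑ i : Fin d, ζ₁ i * algMmesh c φ η i j := by
    intro j
    have hb : algBVec c (mcf c ζ₁ φ) η j = ((Cright c j).mulVec η) ⬝ᵥ mcf c ζ₁ φ := by
      rw [algBVec, dotProduct_comm]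
    rw [hb, dot_mc_left]
    simp only [dotProduct]
    exact Finset.sum_congr rfl fun i _ => by rw [algMmesh_eq]
  simp only [dotProduct, h, Matrix.mulVec, Finset.mul_sum]
  rw [Finset.sum_comm]
  exact Finset.sum_congr rfl fun i _ => Finset.sum_congr rfl fun j _ => by ring

lemma mcf_add_left (a b e : Fin d → F) : mcf c (a + b) e = mcf c a e + mcf c b e := by
  funext k
  simp [mcf, add_mul, Finset.sum_add_distrib]

lemma dot_rho (φ η : Fin d → F) (z : (Fin d → F) × (Fin d → F)) :
    η ⬝ᵥ rhof c φ z
      = η ⬝ᵥ φ + (z.1 ⬝ᵥ algAVec c φ η +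
          (z.2 ⬝ᵥ algBVec c φ η + z.1 ⬝ᵥ (algMmesh c φ η).mulVec z.2)) := by
  have hr : rhof c φ z = φ + (mcf c z.1 φ + (mcf c φ z.2 + mcf c (mcf c z.1 φ) z.2)) := by
    rw [rhof, mcf_add_left]
    abel
  rw [hr]
  simp only [dotProduct_add]
  rw [dot_mc_left, dot_mc_right, dot_mc_double]

lemma addChar_norm_one (θ : AddChar F ℂ) (x : F) : ‖θ x‖ = 1 := by
  have hpow : θ x ^ Fintype.card F = 1 := by
    rw [← AddChar.map_nsmul_eq_pow, nsmul_eq_mul, FiniteField.cast_card_eq_zero, zero_mul,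
      AddChar.map_zero_eq_one]
  exact Complex.norm_eq_one_of_pow_eq_one hpow Fintype.card_ne_zero

lemma conj_addChar (θ : AddChar F ℂ) (x : F) : (starRingEnd ℂ) (θ x) = θ (-x) := by
  have h1 : θ (-x) * θ x = 1 := by rw [← AddChar.map_add_eq_mul]; simp
  have h2 : (θ x)⁻¹ = θ (-x) := (eq_inv_of_mul_eq_one_left h1).symm
  rw [← h2, Complex.inv_eq_conj (addChar_norm_one θ x)]

lemma sum_dot (ψ : AddChar F ℂ) (hψ : ψ ≠ 1) (w : Fin d → F) :
    ∑ x : Fin d → F, ψ (x ⬝ᵥ w) = if w = 0 then ((Fintype.card F : ℂ)) ^ d else 0 := by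
  split_ifs with hw
  · subst hw
    simp only [dotProduct_zero, AddChar.map_zero_eq_one, Finset.sum_const,
      Finset.card_univ, nsmul_eq_mul, mul_one]
    rw [Fintype.card_fun, Fintype.card_fin]
    push_cast
    ring
  · have hker : ∃ x : Fin d → F, ψ (x ⬝ᵥ w) ≠ 1 := by
      obtain ⟨s, hs⟩ := AddChar.ne_one_iff.mp hψ
      obtain ⟨i, hi⟩ : ∃ i, w i ≠ 0 := by
        by_contra h
        push_neg at h
        exact hw (funext h)
      refine ⟨Pi.single i (s / w i), ?_⟩
      rwa [single_dotProduct, div_mul_cancel₀ _ hi]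
    set D : (Fin d → F) →+ F :=
      { toFun := fun x => x ⬝ᵥ w
        map_zero' := by simp
        map_add' := fun x y => add_dotProduct x y w } with hD
    have hsum : ∑ x : Fin d → F, ψ (x ⬝ᵥ w) = ∑ x, (ψ.compAddMonoidHom D) x := rfl
    rw [hsum, AddChar.sum_eq_zero_of_ne_one]
    rw [AddChar.ne_one_iff]
    obtain ⟨x, hx⟩ := hker
    exact ⟨x, hx⟩

lemma sum_filter_dot_eq_zero (ψ : AddChar F ℂ) (hψ : ψ ≠ 1)
    (M : Matrix (Fin d) (Fin d) F) (r b v0 : Fin d → F)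
    (h0 : M.mulVec v0 = 0) (hb : b ⬝ᵥ v0 ≠ 0) :
    ∑ ζ ∈ Finset.univ.filter (fun ζ => M.mulVec ζ = r), ψ (ζ ⬝ᵥ b) = 0 := by
  classical
  obtain ⟨s, hs⟩ := AddChar.ne_one_iff.mp hψ
  have hvb : v0 ⬝ᵥ b ≠ 0 := by rwa [dotProduct_comm]
  set t : F := s / (v0 ⬝ᵥ b) with ht
  have key : ∑ ζ ∈ Finset.univ.filter (fun ζ => M.mulVec ζ = r), ψ (ζ ⬝ᵥ b)
      = ∑ ζ ∈ Finset.univ.filter (fun ζ => M.mulVec ζ = r), ψ ((ζ + t • v0) ⬝ᵥ b) := by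
    apply Finset.sum_bij' (i := fun ζ _ => ζ - t • v0) (j := fun ζ _ => ζ + t • v0)
    · intro ζ hζ
      rw [Finset.mem_filter] at hζ ⊢
      refine ⟨Finset.mem_univ _, ?_⟩
      rw [Matrix.mulVec_sub, hζ.2, Matrix.mulVec_smul, h0, smul_zero, sub_zero]
    · intro ζ hζ
      rw [Finset.mem_filter] at hζ ⊢
      refine ⟨Finset.mem_univ _, ?_⟩
      rw [Matrix.mulVec_add, hζ.2, Matrix.mulVec_smul, h0, smul_zero, add_zero]
    · intro ζ _
      abel
    · intro ζ _
      abel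
    · intro ζ _
      rw [sub_add_cancel]
  have hts : t * (v0 ⬝ᵥ b) = s := div_mul_cancel₀ _ hvb
  simp only [add_dotProduct, smul_dotProduct, smul_eq_mul, hts,
    AddChar.map_add_eq_mul] at key
  have hfac : (∑ ζ ∈ Finset.univ.filter (fun ζ => M.mulVec ζ = r), ψ (ζ ⬝ᵥ b)) * (1 - ψ s)
      = 0 := by
    rw [mul_sub, mul_one]
    nth_rewrite 1 [key]
    rw [← Finset.sum_mul, sub_self]
  rcases mul_eq_zero.mp hfac with h | h
  · exact h
  · exact absurd (by linear_combination -h : ψ s = 1) hs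

lemma card_ker_filter (M : Matrix (Fin d) (Fin d) F) :
    (Finset.univ.filter fun v : Fin d → F => M.mulVec v = 0).card
      = Fintype.card F ^ (d - M.rank) := by
  classical
  have h1 : (Finset.univ.filter fun v : Fin d → F => M.mulVec v = 0).card
      = Fintype.card {v : Fin d → F // M.mulVec v = 0} := (Fintype.card_subtype _).symm
  have e : {v : Fin d → F // M.mulVec v = 0} ≃ LinearMap.ker M.mulVecLin :=
    Equiv.subtypeEquivRight (by
      intro v
      simp [LinearMap.mem_ker, Matrix.mulVecLin_apply])
  have h2 : Fintype.card {v : Fin d → F // M.mulVec v = 0}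
      = Fintype.card (LinearMap.ker M.mulVecLin) := Fintype.card_congr e
  have h3 : Fintype.card (LinearMap.ker M.mulVecLin)
      = Fintype.card F ^ Module.finrank F (LinearMap.ker M.mulVecLin) :=
    Module.card_eq_pow_finrank (K := F)
  have h4 : Module.finrank F (LinearMap.ker M.mulVecLin) = d - M.rank := by
    have h5 := LinearMap.finrank_range_add_finrank_ker M.mulVecLin
    rw [Module.finrank_fintype_fun_eq_card, Fintype.card_fin] at h5
    have h6 : M.rank = Module.finrank F (LinearMap.range M.mulVecLin) := rfl
    omega
  rw [h1, h2, h3, h4]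

lemma sum_sol_meshes (ψ : AddChar F ℂ) (M : Matrix (Fin d) (Fin d) F) (a b b0 : Fin d → F)
    (hb0 : M.mulVec b0 = -a) (horth : ∀ v, M.mulVec v = 0 → b ⬝ᵥ v = 0) :
    ∑ ζ ∈ Finset.univ.filter (fun ζ => M.mulVec ζ = -a), ψ (ζ ⬝ᵥ b)
      = ψ (b0 ⬝ᵥ b) * (Fintype.card F : ℂ) ^ (d - M.rank) := by
  classical
  have key : ∑ ζ ∈ Finset.univ.filter (fun ζ => M.mulVec ζ = -a), ψ (ζ ⬝ᵥ b)
      = ∑ v ∈ Finset.univ.filter (fun v : Fin d → F => M.mulVec v = 0), ψ ((b0 + v) ⬝ᵥ b) := by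
    apply Finset.sum_bij' (i := fun ζ _ => ζ - b0) (j := fun v _ => b0 + v)
    · intro ζ hζ
      rw [Finset.mem_filter] at hζ ⊢
      refine ⟨Finset.mem_univ _, ?_⟩
      rw [Matrix.mulVec_sub, hζ.2, hb0, sub_self]
    · intro v hv
      rw [Finset.mem_filter] at hv ⊢
      refine ⟨Finset.mem_univ _, ?_⟩
      rw [Matrix.mulVec_add, hv.2, hb0, add_zero]
    · intro ζ _
      abel
    · intro v _
      abel
    · intro ζ _
      rw [add_sub_cancel]
  rw [key]
  have hconst : ∀ v ∈ Finset.univ.filter (fun v : Fin d → F => M.mulVec v = 0),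
      ψ ((b0 + v) ⬝ᵥ b) = ψ (b0 ⬝ᵥ b) := by
    intro v hv
    rw [Finset.mem_filter] at hv
    rw [add_dotProduct, show v ⬝ᵥ b = 0 by rw [dotProduct_comm]; exact horth v hv.2,
      add_zero]
  rw [Finset.sum_congr rfl hconst, Finset.sum_const, card_ker_filter, nsmul_eq_mul]
  push_cast
  ring

lemma card_pi_fun : Fintype.card (Fin d → F) = Fintype.card F ^ d := by
  simp [Fintype.card_pi]

lemma addChar_map_sum {ι : Type*} (θ : AddChar F ℂ) (s : Finset ι) (f : ι → F) :
    θ (∑ i ∈ s, f i) = ∏ i ∈ s, θ (f i) := by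
  classical
  induction s using Finset.induction with
  | empty => simp
  | insert _ _ h ih => rw [Finset.sum_insert h, Finset.prod_insert h, AddChar.map_add_eq_mul, ih]

lemma T_eval (ψ : AddChar F ℂ) (hψ : ψ ≠ 1) (φ η : Fin d → F) :
    ∑ z : (Fin d → F) × (Fin d → F), ψ (η ⬝ᵥ rhof c φ z)
      = ψ (η ⬝ᵥ φ) * (Fintype.card F : ℂ) ^ d *
        ∑ ζ ∈ Finset.univ.filter
            (fun ζ => (algMmesh c φ η).mulVec ζ = -(algAVec c φ η)),
          ψ (ζ ⬝ᵥ algBVec c φ η) := by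
  classical
  have step1 : ∀ z : (Fin d → F) × (Fin d → F),
      ψ (η ⬝ᵥ rhof c φ z)
        = (ψ (η ⬝ᵥ φ) * ψ (z.2 ⬝ᵥ algBVec c φ η)) *
            ψ (z.1 ⬝ᵥ (algAVec c φ η + (algMmesh c φ η).mulVec z.2)) := by
    intro z
    rw [dot_rho, dotProduct_add]
    simp only [AddChar.map_add_eq_mul]
    ring
  simp only [step1]
  rw [Fintype.sum_prod_type_right]
  have step2 : ∀ ζ2 : Fin d → F,
      (∑ ζ1 : Fin d → F, (ψ (η ⬝ᵥ φ) * ψ (ζ2 ⬝ᵥ algBVec c φ η)) *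
          ψ (ζ1 ⬝ᵥ (algAVec c φ η + (algMmesh c φ η).mulVec ζ2)))
        = if (algMmesh c φ η).mulVec ζ2 = -(algAVec c φ η)
            then (ψ (η ⬝ᵥ φ) * ψ (ζ2 ⬝ᵥ algBVec c φ η)) * (Fintype.card F : ℂ) ^ d
            else 0 := by
    intro ζ2
    rw [← Finset.mul_sum, sum_dot ψ hψ]
    have hcond : (algAVec c φ η + (algMmesh c φ η).mulVec ζ2 = 0)
        = ((algMmesh c φ η).mulVec ζ2 = -(algAVec c φ η)) := by
      apply propext
      constructor
      · intro h
        exact eq_neg_of_add_eq_zero_right h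
      · intro h
        rw [h]
        abel
    rw [mul_ite, mul_zero]
    exact if_congr (Eq.to_iff hcond) rfl rfl
  rw [Finset.sum_congr rfl fun ζ2 _ => step2 ζ2, ← Finset.sum_filter, Finset.mul_sum]
  exact Finset.sum_congr rfl fun ζ _ => by ring

lemma orbit_sum (hc : ∀ i j : Fin d, Xb i * Xb j = ∑ k : Fin d, c i j k • Xb k)
    (hupper : ∀ i : Fin d, ∀ a b : Fin n, b ≤ a → Xb i a b = 0)
    (hli : LinearIndependent F Xb) (φ : Fin d → F) (f : (Fin d → F) → ℂ) :
    ((Fintype.card F : ℂ) ^ d) ^ 2 * ∑ ρ ∈ Finset.univ.image (rhof c φ), f ρ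
      = ((Finset.univ.image (rhof c φ)).card : ℂ) *
          ∑ z : (Fin d → F) × (Fin d → F), f (rhof c φ z) := by
  classical
  set O' := Finset.univ.image (rhof c φ) with hO'
  set K := (Finset.univ.filter
    fun z : (Fin d → F) × (Fin d → F) => rhof c φ z = φ).card with hK
  have hfib : ∀ ρ ∈ O',
      (Finset.univ.filter fun z : (Fin d → F) × (Fin d → F) => rhof c φ z = ρ).card = K := by
    intro ρ hρ
    obtain ⟨w, _, rfl⟩ := Finset.mem_image.mp hρ
    exact fiber_card hc hupper hli φ w
  have hT : ∑ z : (Fin d → F) × (Fin d → F), f (rhof c φ z)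
      = ∑ ρ ∈ O', (K : ℂ) * f ρ := by
    rw [← Finset.sum_fiberwise_of_maps_to'
      (fun z _ => Finset.mem_image_of_mem _ (Finset.mem_univ z)) f]
    refine Finset.sum_congr rfl fun ρ hρ => ?_
    rw [Finset.sum_const, hfib ρ hρ, nsmul_eq_mul]
  have hcard : Fintype.card F ^ d * Fintype.card F ^ d = O'.card * K := by
    have h1 := Finset.card_eq_sum_card_image (rhof c φ)
      (Finset.univ : Finset ((Fin d → F) × (Fin d → F)))
    rw [Finset.card_univ, Fintype.card_prod, card_pi_fun] at h1
    rw [h1, Finset.sum_congr rfl hfib, Finset.sum_const, smul_eq_mul]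
  calc ((Fintype.card F : ℂ) ^ d) ^ 2 * ∑ ρ ∈ O', f ρ
      = ((O'.card * K : ℕ) : ℂ) * ∑ ρ ∈ O', f ρ := by
        rw [← hcard]
        push_cast
        ring
    _ = (O'.card : ℂ) * ((K : ℂ) * ∑ ρ ∈ O', f ρ) := by
        push_cast
        ring
    _ = (O'.card : ℂ) * ∑ ρ ∈ O', (K : ℂ) * f ρ := by rw [Finset.mul_sum]
    _ = (O'.card : ℂ) * ∑ z : (Fin d → F) × (Fin d → F), f (rhof c φ z) := by rw [hT]

lemma orbit_coe (hc : ∀ i j : Fin d, Xb i * Xb j = ∑ k : Fin d, c i j k • Xb k)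
    (hli : LinearIndependent F Xb) (φ : Fin d → F) :
    algCoeffBiOrbit Xb φ = ↑(Finset.univ.image (rhof c φ)) := by
  ext ρ
  rw [mem_orbit_iff hc hli]
  simp

lemma orbit_card (hc : ∀ i j : Fin d, Xb i * Xb j = ∑ k : Fin d, c i j k • Xb k)
    (hli : LinearIndependent F Xb) (φ : Fin d → F) :
    Nat.card (algCoeffBiOrbit Xb φ) = (Finset.univ.image (rhof c φ)).card := by
  rw [orbit_coe hc hli, Nat.card_coe_set_eq, Set.ncard_coe_finset]

lemma superchar_eq (hc : ∀ i j : Fin d, Xb i * Xb j = ∑ k : Fin d, c i j k • Xb k)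
    (hli : LinearIndependent F Xb) (θ : AddChar F ℂ) (η φ : Fin d → F) :
    algCoeffSuperchar Xb θ η φ
      = ((Nat.card (algCoeffRightOrbit Xb η) : ℂ) /
          ((Finset.univ.image (rhof c φ)).card : ℂ)) *
        ∑ ρ ∈ Finset.univ.image (rhof c φ), (starRingEnd ℂ) (θ (η ⬝ᵥ ρ)) := by
  rw [algCoeffSuperchar, orbit_card hc hli, orbit_coe hc hli, finsum_mem_coe_finset]

lemma main_engine (hc : ∀ i j : Fin d, Xb i * Xb j = ∑ k : Fin d, c i j k • Xb k)
    (hupper : ∀ i : Fin d, ∀ a b : Fin n, b ≤ a → Xb i a b = 0)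
    (hli : LinearIndependent F Xb) (ψ : AddChar F ℂ) (hψ : ψ ≠ 1)
    (φ η : Fin d → F) (R : ℂ) :
    (R / ((Finset.univ.image (rhof c φ)).card : ℂ)) *
        ∑ ρ ∈ Finset.univ.image (rhof c φ), ψ (η ⬝ᵥ ρ)
      = R / ((Fintype.card F : ℂ) ^ d) ^ 2 *
          (ψ (η ⬝ᵥ φ) * (Fintype.card F : ℂ) ^ d *
            ∑ ζ ∈ Finset.univ.filter
                (fun ζ => (algMmesh c φ η).mulVec ζ = -(algAVec c φ η)),
              ψ (ζ ⬝ᵥ algBVec c φ η)) := by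
  classical
  have hO := orbit_sum hc hupper hli φ (fun ρ => ψ (η ⬝ᵥ ρ))
  rw [← T_eval ψ hψ φ η]
  have hq : ((Fintype.card F : ℂ)) ≠ 0 := Nat.cast_ne_zero.mpr Fintype.card_ne_zero
  have hq2 : (((Fintype.card F : ℂ)) ^ d) ^ 2 ≠ 0 := pow_ne_zero _ (pow_ne_zero _ hq)
  have hO0 : ((Finset.univ.image (rhof c φ)).card : ℂ) ≠ 0 := by
    have hmem : φ ∈ Finset.univ.image (rhof c φ) :=
      Finset.mem_image.mpr ⟨(0, 0), Finset.mem_univ _, rho_zero hc hli φ⟩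
    exact Nat.cast_ne_zero.mpr (Finset.card_ne_zero_of_mem hmem)
  field_simp
  linear_combination R * hO

lemma algMmesh_neg (φ η : Fin d → F) : algMmesh c φ (-η) = -(algMmesh c φ η) := by
  ext i j
  simp [algMmesh, Matrix.mulVec_neg, dotProduct_neg]

lemma algAVec_neg (φ η : Fin d → F) : algAVec c φ (-η) = -(algAVec c φ η) := by
  funext i
  simp [algAVec, Matrix.mulVec_neg, dotProduct_neg]

lemma algBVec_neg (φ η : Fin d → F) : algBVec c φ (-η) = -(algBVec c φ η) := by
  funext j
  simp [algBVec, Matrix.mulVec_neg, dotProduct_neg]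

end Aux

theorem stmt17 {F : Type*} [Field F] [Fintype F] [DecidableEq F] {n d : ℕ}
    (Xb : Fin d → Matrix (Fin n) (Fin n) F)
    (hupper : ∀ i : Fin d, ∀ a b : Fin n, b ≤ a → Xb i a b = 0)
    (hli : LinearIndependent F Xb)
    (c : Fin d → Fin d → Fin d → F)
    (hc : ∀ i j : Fin d, Xb i * Xb j = ∑ k : Fin d, c i j k • Xb k)
    (θ : AddChar F ℂ) (hθ : θ ≠ 1) (φ η : Fin d → F) :
    (algMeshes c φ η →
      ∀ b0 : Fin d → F, (algMmesh c φ η).mulVec b0 = -algAVec c φ η →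
        (starRingEnd ℂ) (algCoeffSuperchar Xb θ η φ) =
          ((Nat.card (algCoeffRightOrbit Xb η) : ℂ) /
              (Fintype.card F : ℂ) ^ (algMmesh c φ η).rank) *
            θ (b0 ⬝ᵥ algBVec c φ η) * ∏ i : Fin d, θ (φ i * η i)) ∧
    (¬ algMeshes c φ η → algCoeffSuperchar Xb θ η φ = 0) := by
  classical
  constructor
  · rintro ⟨-, horth⟩ b0 hb0
    have hconj : (starRingEnd ℂ) (algCoeffSuperchar Xb θ η φ)
        = ((Nat.card (algCoeffRightOrbit Xb η) : ℂ) /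
            ((Finset.univ.image (rhof c φ)).card : ℂ)) *
          ∑ ρ ∈ Finset.univ.image (rhof c φ), θ (η ⬝ᵥ ρ) := by
      rw [superchar_eq hc hli θ η φ, _root_.map_mul, map_div₀, map_sum]
      simp [Complex.conj_conj]
    rw [hconj, main_engine hc hupper hli θ hθ φ η _,
      sum_sol_meshes θ (algMmesh c φ η) (algAVec c φ η) (algBVec c φ η) b0 hb0
        (fun v hv => horth v hv)]
    have hq : ((Fintype.card F : ℂ)) ≠ 0 := Nat.cast_ne_zero.mpr Fintype.card_ne_zero
    have hd : (d - (algMmesh c φ η).rank) + (algMmesh c φ η).rank = d :=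
      Nat.sub_add_cancel (Matrix.rank_le_width _)
    have hprod : ∏ i : Fin d, θ (φ i * η i) = θ (η ⬝ᵥ φ) := by
      rw [← addChar_map_sum]
      congr 1
      simp only [dotProduct]
      exact Finset.sum_congr rfl fun i _ => mul_comm _ _
    rw [hprod]
    have hsplit : ((Fintype.card F : ℂ) ^ d) ^ 2
        = (Fintype.card F : ℂ) ^ d *
            ((Fintype.card F : ℂ) ^ (d - (algMmesh c φ η).rank) *
              (Fintype.card F : ℂ) ^ (algMmesh c φ η).rank) := by
      rw [← pow_add, hd]
      ring
    rw [hsplit]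
    have h1 : (Fintype.card F : ℂ) ^ d ≠ 0 := pow_ne_zero _ hq
    have h2 : (Fintype.card F : ℂ) ^ (d - (algMmesh c φ η).rank) ≠ 0 := pow_ne_zero _ hq
    have h3 : (Fintype.card F : ℂ) ^ ((algMmesh c φ η).rank) ≠ 0 := pow_ne_zero _ hq
    field_simp
  · intro hnm
    rw [algMeshes, not_and_or] at hnm
    have hzero : ∑ ζ ∈ Finset.univ.filter
          (fun ζ => (algMmesh c φ (-η)).mulVec ζ = -(algAVec c φ (-η))),
        θ (ζ ⬝ᵥ algBVec c φ (-η)) = 0 := by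
      rcases hnm with h | h
      · push_neg at h
        have hempty : Finset.univ.filter
            (fun ζ => (algMmesh c φ (-η)).mulVec ζ = -(algAVec c φ (-η))) = ∅ := by
          rw [Finset.filter_eq_empty_iff]
          intro ζ _
          rw [algMmesh_neg, algAVec_neg, neg_neg, Matrix.neg_mulVec]
          intro hcontra
          exact h ζ (neg_eq_iff_eq_neg.mp hcontra)
        rw [hempty, Finset.sum_empty]
      · push_neg at h
        obtain ⟨v0, hv0, hbv0⟩ := h
        apply sum_filter_dot_eq_zero θ hθ _ _ _ v0
        · rw [algMmesh_neg, Matrix.neg_mulVec, hv0, neg_zero]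
        · rw [algBVec_neg, neg_dotProduct, neg_ne_zero]
          exact hbv0
    have hchi : algCoeffSuperchar Xb θ η φ
        = ((Nat.card (algCoeffRightOrbit Xb η) : ℂ) /
            ((Finset.univ.image (rhof c φ)).card : ℂ)) *
          ∑ ρ ∈ Finset.univ.image (rhof c φ), θ ((-η) ⬝ᵥ ρ) := by
      rw [superchar_eq hc hli θ η φ]
      congr 1
      exact Finset.sum_congr rfl fun ρ _ => by
        rw [conj_addChar, ← neg_dotProduct]
    rw [hchi, main_engine hc hupper hli θ hθ φ (-η) _, hzero, mul_zero, mul_zero]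

end SCT
end
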